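/- arXiv:2412.10837 — 8 statements merged into one kernel-verified Lean document; each statement's English description precedes it below -/
import Mathlib

section
/- For every set partition π of [l+k], the linear map D_π : (ℝⁿ)^{⊗k} → (ℝⁿ)^{⊗l} is S_n-equivariant, i.e. D_π ∘ g^{⊗k} = g^{⊗l} ∘ D_π for every n×n permutation matrix g. -/
open Classical
noncomputable section

/-- The `k`-th tensor (Kronecker) power of an `n × n` real matrix, acting on
`(ℝⁿ)^{⊗k}` encoded as the coordinate space indexed by tuples `Fin k → Fin n`. -/
def tensorPow (n k : ℕ) (g : Matrix (Fin n) (Fin n) ℝ) :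
    Matrix (Fin k → Fin n) (Fin k → Fin n) ℝ :=
  Matrix.of fun I J => ∏ i, g (I i) (J i)

/-- The permutation matrix of `σ ∈ S_n`, sending `e_j` to `e_{σ j}`. -/
def permMat (n : ℕ) (σ : Equiv.Perm (Fin n)) : Matrix (Fin n) (Fin n) ℝ :=
  Matrix.of fun i j => if i = σ j then (1 : ℝ) else 0

/-- The matrix `D_π : (ℝⁿ)^{⊗k} → (ℝⁿ)^{⊗l}` associated to a set partition `π` of
`[l+k]` (encoded as a setoid on `Fin (l+k)`, top row first): its `(I, J)` entry is `1`
iff the combined tuple `(I, J)` is constant on each block of `π`, and `0` otherwise. -/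
def Dmat (n l k : ℕ) (π : Setoid (Fin (l + k))) :
    Matrix (Fin l → Fin n) (Fin k → Fin n) ℝ :=
  Matrix.of fun I J =>
    if ∀ x y, π.r x y → Fin.append I J x = Fin.append I J y then (1 : ℝ) else 0

lemma tensorPow_permMat_apply (n k : ℕ) (σ : Equiv.Perm (Fin n))
    (I J : Fin k → Fin n) :
    tensorPow n k (permMat n σ) I J = if I = σ ∘ J then 1 else 0 := by
  simp only [tensorPow, permMat, Matrix.of_apply, Finset.prod_boole,
    funext_iff, Function.comp_apply, Finset.mem_univ, forall_true_left]

lemma append_comp' {n l k : ℕ} (f : Fin n → Fin n) (I : Fin l → Fin n) (J : Fin k → Fin n) :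
    Fin.append (f ∘ I) (f ∘ J) = f ∘ Fin.append I J := by
  funext x
  refine Fin.addCases (fun i => ?_) (fun i => ?_) x <;>
    simp [Fin.append_left, Fin.append_right]

/-- for every set partition `π` of `[l+k]`, the map `D_π` is
`S_n`-equivariant: `g^{⊗l} ∘ D_π = D_π ∘ g^{⊗k}` for every permutation matrix `g`. -/
theorem Dmat_equivariant (n k l : ℕ) (hn : 0 < n) (π : Setoid (Fin (l + k)))
    (σ : Equiv.Perm (Fin n)) :
    tensorPow n l (permMat n σ) * Dmat n l k π = Dmat n l k π * tensorPow n k (permMat n σ) := by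
  ext I J
  rw [Matrix.mul_apply, Matrix.mul_apply]
  have hL : ∀ K : Fin l → Fin n,
      tensorPow n l (permMat n σ) I K = if K = ⇑σ⁻¹ ∘ I then 1 else 0 := by
    intro K
    rw [tensorPow_permMat_apply]
    congr 1
    simp [funext_iff, Equiv.eq_symm_apply, eq_comm, Equiv.Perm.inv_def]
  simp only [hL, tensorPow_permMat_apply, ite_mul, one_mul, zero_mul, mul_ite, mul_one, mul_zero,
    Finset.sum_ite_eq', Finset.sum_ite_eq, Finset.mem_univ, if_true]
  show Dmat n l k π (⇑σ⁻¹ ∘ I) J = Dmat n l k π I (⇑σ ∘ J)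
  simp only [Dmat, Matrix.of_apply]
  congr 1
  have key : Fin.append (⇑σ⁻¹ ∘ I) J = ⇑σ⁻¹ ∘ Fin.append I (⇑σ ∘ J) := by
    have hJ : ⇑σ⁻¹ ∘ (⇑σ ∘ J) = J := by funext m; simp
    rw [← append_comp', hJ]
  rw [key, eq_iff_iff]
  constructor
  · intro h x y hxy
    have := h x y hxy
    simpa using σ⁻¹.injective.eq_iff.mp this
  · intro h x y hxy
    simp [Function.comp_apply, h x y hxy]
end
end

section
/- Every S_n-equivariant linear map φ : (ℝⁿ)^{⊗k} → (ℝⁿ)^{⊗l} is an ℝ-linear combination of the maps D_π, where π ranges over all set partitions of [l+k]; equivalently, the linear map from the free ℝ-vector space on set partitions of [l+k] to Hom_{S_n}((ℝⁿ)^{⊗k}, (ℝⁿ)^{⊗l}) sending π to D_π is surjective. -/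
open Classical
noncomputable section

instance setoidFinite (m : ℕ) : Finite (Setoid (Fin m)) :=
  Finite.of_injective (fun s => s.r) fun a b h => Setoid.ext fun x y => iff_of_eq (congrFun₂ h x y)

noncomputable instance (m : ℕ) : Fintype (Setoid (Fin m)) := Fintype.ofFinite _

lemma exists_perm_comp {m n : ℕ} (f g : Fin m → Fin n)
    (h : Setoid.ker f = Setoid.ker g) : ∃ σ : Equiv.Perm (Fin n), σ ∘ f = g := by
  let Q := Quotient (Setoid.ker f)
  let fbar : Q → Fin n := Quotient.lift f (fun a b hab => hab)
  have hgker : ∀ a b : Fin m, Setoid.ker f a b → g a = g b := by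
    intro a b hab; rw [h] at hab; exact hab
  let gbar : Q → Fin n := Quotient.lift g hgker
  have hfinj : Function.Injective fbar := by
    rintro ⟨a⟩ ⟨b⟩ hab
    exact Quotient.sound (hab : f a = f b)
  have hginj : Function.Injective gbar := by
    rintro ⟨a⟩ ⟨b⟩ hab
    have : Setoid.ker g a b := hab
    rw [← h] at this
    exact Quotient.sound this
  let e : {x : Fin n // x ∈ Set.range fbar} ≃ {x : Fin n // x ∈ Set.range gbar} :=
    (Equiv.ofInjective fbar hfinj).symm.trans (Equiv.ofInjective gbar hginj)
  refine ⟨e.extendSubtype, funext fun x => ?_⟩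
  have hx : f x ∈ Set.range fbar := ⟨⟦x⟧, rfl⟩
  have := e.extendSubtype_apply_of_mem (f x) hx
  simp only [Function.comp_apply, this]
  have h1 : (⟨f x, hx⟩ : {x : Fin n // x ∈ Set.range fbar})
      = Equiv.ofInjective fbar hfinj ⟦x⟧ := Subtype.ext rfl
  show (gbar <| (Equiv.ofInjective fbar hfinj).symm ⟨f x, hx⟩ : Fin n) = g x
  rw [h1, Equiv.symm_apply_apply]
  rfl


def Emat (n l k : ℕ) (π : Setoid (Fin (l + k))) :
    Matrix (Fin l → Fin n) (Fin k → Fin n) ℝ :=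
  Matrix.of fun I J => if Setoid.ker (Fin.append I J) = π then (1 : ℝ) else 0

lemma Dmat_apply_eq (n l k : ℕ) (π : Setoid (Fin (l + k)))
    (I : Fin l → Fin n) (J : Fin k → Fin n) :
    Dmat n l k π I J = if π ≤ Setoid.ker (Fin.append I J) then (1 : ℝ) else 0 := by
  have h : (∀ x y, π.r x y → Fin.append I J x = Fin.append I J y)
      ↔ π ≤ Setoid.ker (Fin.append I J) := by
    constructor
    · intro hc
      rw [Setoid.le_def]
      intro x y hxy
      exact hc x y hxy
    · intro hc x y hxy
      exact hc hxy
  simp [Dmat, h]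

lemma Dmat_eq_sum (n l k : ℕ) (π : Setoid (Fin (l + k))) :
    Dmat n l k π = ∑ ρ ∈ Finset.univ.filter (fun ρ => π ≤ ρ), Emat n l k ρ := by
  ext I J
  rw [Dmat_apply_eq]
  rw [Matrix.sum_apply]
  unfold Emat
  simp only [Matrix.of_apply]
  rw [Finset.sum_ite_eq]
  simp [Finset.mem_filter]

lemma Emat_mem (n l k : ℕ) (π : Setoid (Fin (l + k))) :
    Emat n l k π ∈ Submodule.span ℝ (Set.range (Dmat n l k)) := by
  refine wellFounded_gt.induction (C := fun π => Emat n l k π ∈ Submodule.span ℝ (Set.range (Dmat n l k))) π ?_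
  intro π ih
  have hsplit : Finset.univ.filter (fun ρ => π ≤ ρ)
      = insert π (Finset.univ.filter (fun ρ => π < ρ)) := by
    ext ρ
    simp only [Finset.mem_filter, Finset.mem_insert, Finset.mem_univ, true_and]
    constructor
    · intro h
      rcases lt_or_eq_of_le h with h | h
      · exact Or.inr h
      · exact Or.inl h.symm
    · rintro (rfl | h)
      · exact le_refl _
      · exact le_of_lt h
  have hnotmem : π ∉ Finset.univ.filter (fun ρ => π < ρ) := by
    simp
  have hD := Dmat_eq_sum n l k π
  rw [hsplit, Finset.sum_insert hnotmem] at hD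
  have : Emat n l k π
      = Dmat n l k π - ∑ ρ ∈ Finset.univ.filter (fun ρ => π < ρ), Emat n l k ρ := by
    rw [hD, add_sub_cancel_right]
  rw [this]
  refine sub_mem (Submodule.subset_span ⟨π, rfl⟩) ?_
  exact Submodule.sum_mem _ fun ρ hρ => ih ρ (Finset.mem_filter.mp hρ).2

lemma equiv_pointwise (n k l : ℕ)
    (φ : Matrix (Fin l → Fin n) (Fin k → Fin n) ℝ)
    (hφ : ∀ σ : Equiv.Perm (Fin n),
      tensorPow n l (permMat n σ) * φ = φ * tensorPow n k (permMat n σ))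
    (σ : Equiv.Perm (Fin n)) (I : Fin l → Fin n) (J : Fin k → Fin n) :
    φ I J = φ (σ ∘ I) (σ ∘ J) := by
  have h := congrFun (congrFun (hφ σ) (σ ∘ I)) J
  rw [Matrix.mul_apply, Matrix.mul_apply] at h
  have hL : ∀ B, tensorPow n l (permMat n σ) (σ ∘ I) B = if I = B then (1:ℝ) else 0 := by
    intro B
    unfold tensorPow permMat
    simp only [Matrix.of_apply, Function.comp_apply]
    rw [Finset.prod_boole]
    congr 1
    simp [eq_iff_iff, funext_iff]
  have hR : ∀ J', tensorPow n k (permMat n σ) J' J = if J' = σ ∘ J then (1:ℝ) else 0 := by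
    intro J'
    unfold tensorPow permMat
    simp only [Matrix.of_apply, Function.comp_apply]
    rw [Finset.prod_boole]
    congr 1
    simp [eq_iff_iff, funext_iff]
  simp only [hL, hR, ite_mul, mul_ite, one_mul, zero_mul, mul_one, mul_zero] at h
  rw [Finset.sum_ite_eq, Finset.sum_ite_eq'] at h
  simpa using h


/-- every `S_n`-equivariant linear map `(ℝⁿ)^{⊗k} → (ℝⁿ)^{⊗l}` lies in the
`ℝ`-span of the maps `D_π`, `π` ranging over all set partitions of `[l+k]`; i.e. the
map from the free vector space on set partitions to equivariant homs is surjective. -/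
theorem Dmat_span (n k l : ℕ) (hn : 0 < n)
    (φ : Matrix (Fin l → Fin n) (Fin k → Fin n) ℝ)
    (hφ : ∀ σ : Equiv.Perm (Fin n),
      tensorPow n l (permMat n σ) * φ = φ * tensorPow n k (permMat n σ)) :
    φ ∈ Submodule.span ℝ (Set.range (Dmat n l k)) := by
  have hpt : ∀ (σ : Equiv.Perm (Fin n)) I J, φ I J = φ (σ ∘ I) (σ ∘ J) :=
    equiv_pointwise n k l φ hφ
  let c : Setoid (Fin (l + k)) → ℝ := fun π =>
    if h : ∃ f : Fin (l + k) → Fin n, Setoid.ker f = π then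
      φ (fun i => Classical.choose h (Fin.castAdd k i))
        (fun j => Classical.choose h (Fin.natAdd l j))
    else 0
  have hphi : φ = ∑ π : Setoid (Fin (l + k)), c π • Emat n l k π := by
    ext I J
    rw [Matrix.sum_apply]
    simp only [Matrix.smul_apply, Emat, Matrix.of_apply, smul_eq_mul, mul_ite, mul_one, mul_zero]
    rw [Finset.sum_ite_eq]
    simp only [Finset.mem_univ, if_true]
    -- now: φ I J = c (Setoid.ker (Fin.append I J))
    have hex : ∃ f : Fin (l + k) → Fin n, Setoid.ker f = Setoid.ker (Fin.append I J) :=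
      ⟨Fin.append I J, rfl⟩
    simp only [c, dif_pos hex]
    set g := Classical.choose hex with hgdef
    have hg : Setoid.ker g = Setoid.ker (Fin.append I J) := Classical.choose_spec hex
    obtain ⟨σ, hσ⟩ := exists_perm_comp g (Fin.append I J) hg
    have h1 : σ ∘ (fun i => g (Fin.castAdd k i)) = I := by
      funext i
      have := congrFun hσ (Fin.castAdd k i)
      simp only [Function.comp_apply] at this ⊢
      rw [this, Fin.append_left]
    have h2 : σ ∘ (fun j => g (Fin.natAdd l j)) = J := by
      funext j
      have := congrFun hσ (Fin.natAdd l j)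
      simp only [Function.comp_apply] at this ⊢
      rw [this, Fin.append_right]
    rw [hpt σ (fun i => g (Fin.castAdd k i)) (fun j => g (Fin.natAdd l j)), h1, h2]
  rw [hphi]
  exact Submodule.sum_mem _ fun π _ => Submodule.smul_mem _ _ (Emat_mem n l k π)
end
end

section
/- Let π₁ be a set partition of [l+k] (top row {1,…,l}, bottom row {l+1,…,l+k}) and π₂ a set partition of [m+l] (top row {1,…,m}, bottom row {m+1,…,m+l}). Then D_{π₂} ∘ D_{π₁} = n^{c(π₂,π₁)} · D_{π₂∘π₁}; equivalently, for all I ∈ [n]^m and J ∈ [n]^k, Σ_{K ∈ [n]^l} δ_{π₂,(I,K)} δ_{π₁,(K,J)} = n^{c(π₂,π₁)} δ_{π₂∘π₁,(I,J)}. -/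
open Classical
noncomputable section

/-- Map from the disjoint union `A ⊔ B ⊔ C` (with `A = [m]`, `B = [l]`, `C = [k]`) to the
vertex set `[m+l]` of the upper diagram `π₂` (`a ∈ A` is vertex `a`, `b ∈ B` is vertex `m+b`;
`C` is not part of the upper diagram). -/
def toUpper (m l k : ℕ) : Fin m ⊕ (Fin l ⊕ Fin k) → Option (Fin (m + l))
  | Sum.inl a => some (Fin.castAdd l a)
  | Sum.inr (Sum.inl b) => some (Fin.natAdd m b)
  | Sum.inr (Sum.inr _) => none

/-- Map from `A ⊔ B ⊔ C` to the vertex set `[l+k]` of the lower diagram `π₁`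
(`b ∈ B` is vertex `b`, `c ∈ C` is vertex `l+c`; `A` is not part of the lower diagram). -/
def toLower (m l k : ℕ) : Fin m ⊕ (Fin l ⊕ Fin k) → Option (Fin (l + k))
  | Sum.inl _ => none
  | Sum.inr (Sum.inl b) => some (Fin.castAdd k b)
  | Sum.inr (Sum.inr c) => some (Fin.natAdd l c)

/-- The relation on `A ⊔ B ⊔ C` induced by the two diagrams `π₂` (on `A ⊔ B`) and
`π₁` (on `B ⊔ C`); the concatenated relation `∼` is its equivalence closure `EqvGen`. -/
def glue (m l k : ℕ) (π₂ : Setoid (Fin (m + l))) (π₁ : Setoid (Fin (l + k)))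
    (x y : Fin m ⊕ (Fin l ⊕ Fin k)) : Prop :=
  (∃ a b, toUpper m l k x = some a ∧ toUpper m l k y = some b ∧ π₂.r a b) ∨
  (∃ a b, toLower m l k x = some a ∧ toLower m l k y = some b ∧ π₁.r a b)

/-- The inclusion of the outer vertex set `[m+k]` into `A ⊔ B ⊔ C`. -/
def embMK (m l k : ℕ) (x : Fin (m + k)) : Fin m ⊕ (Fin l ⊕ Fin k) :=
  Fin.addCases (motive := fun _ => Fin m ⊕ (Fin l ⊕ Fin k))
    (fun a => Sum.inl a) (fun c => Sum.inr (Sum.inr c)) x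

/-- The composition `π₂ ∘ π₁` of set partition diagrams: the set partition of `[m+k]`
induced by the equivalence closure of `glue` on `A ⊔ C`. -/
def compSetoid (m l k : ℕ) (π₂ : Setoid (Fin (m + l))) (π₁ : Setoid (Fin (l + k))) :
    Setoid (Fin (m + k)) :=
  Setoid.comap (embMK m l k) (Relation.EqvGen.setoid (glue m l k π₂ π₁))

/-- `c(π₂, π₁)`: the number of `∼`-equivalence classes contained entirely in the
middle row `B`. -/
def removedCount (m l k : ℕ) (π₂ : Setoid (Fin (m + l))) (π₁ : Setoid (Fin (l + k))) : ℕ :=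
  Nat.card {q : Quotient (Relation.EqvGen.setoid (glue m l k π₂ π₁)) //
    ∀ x, Quotient.mk (Relation.EqvGen.setoid (glue m l k π₂ π₁)) x = q →
      ∃ b : Fin l, x = Sum.inr (Sum.inl b)}

lemma toUpper_surj (m l k : ℕ) (a : Fin (m + l)) : ∃ x, toUpper m l k x = some a := by
  refine Fin.addCases (fun a => ⟨Sum.inl a, rfl⟩) (fun b => ⟨Sum.inr (Sum.inl b), rfl⟩) a

lemma toLower_surj (m l k : ℕ) (a : Fin (l + k)) : ∃ x, toLower m l k x = some a := by
  refine Fin.addCases (fun b => ⟨Sum.inr (Sum.inl b), rfl⟩) (fun c => ⟨Sum.inr (Sum.inr c), rfl⟩) a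

lemma elim_toUpper {n m l k : ℕ} (I : Fin m → Fin n) (K : Fin l → Fin n) (J : Fin k → Fin n)
    (x : Fin m ⊕ (Fin l ⊕ Fin k)) (a : Fin (m + l)) (hx : toUpper m l k x = some a) :
    Sum.elim I (Sum.elim K J) x = Fin.append I K a := by
  match x with
  | Sum.inl a' =>
    obtain rfl := Option.some.inj hx
    simp [Fin.append_left]
  | Sum.inr (Sum.inl b) =>
    obtain rfl := Option.some.inj hx
    simp [Fin.append_right]
  | Sum.inr (Sum.inr c) => exact absurd hx (by simp [toUpper])

lemma elim_toLower {n m l k : ℕ} (I : Fin m → Fin n) (K : Fin l → Fin n) (J : Fin k → Fin n)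
    (x : Fin m ⊕ (Fin l ⊕ Fin k)) (a : Fin (l + k)) (hx : toLower m l k x = some a) :
    Sum.elim I (Sum.elim K J) x = Fin.append K J a := by
  match x with
  | Sum.inl a' => exact absurd hx (by simp [toLower])
  | Sum.inr (Sum.inl b) =>
    obtain rfl := Option.some.inj hx
    simp [Fin.append_left]
  | Sum.inr (Sum.inr c) =>
    obtain rfl := Option.some.inj hx
    simp [Fin.append_right]

lemma comp_r {m l k : ℕ} (π₂ : Setoid (Fin (m + l))) (π₁ : Setoid (Fin (l + k)))
    (x y : Fin (m + k)) :
    (compSetoid m l k π₂ π₁).r x y ↔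
      Relation.EqvGen (glue m l k π₂ π₁) (embMK m l k x) (embMK m l k y) := Iff.rfl

lemma glue_iff {n m l k : ℕ} (π₂ : Setoid (Fin (m + l))) (π₁ : Setoid (Fin (l + k)))
    (I : Fin m → Fin n) (K : Fin l → Fin n) (J : Fin k → Fin n) :
    ((∀ x y, π₂.r x y → Fin.append I K x = Fin.append I K y) ∧
      (∀ x y, π₁.r x y → Fin.append K J x = Fin.append K J y)) ↔
    (∀ x y, Relation.EqvGen (glue m l k π₂ π₁) x y →
      Sum.elim I (Sum.elim K J) x = Sum.elim I (Sum.elim K J) y) := by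
  constructor
  · rintro ⟨h2, h1⟩ x y hxy
    induction hxy with
    | rel x y h =>
      rcases h with ⟨a, b, hxa, hyb, hab⟩ | ⟨a, b, hxa, hyb, hab⟩
      · rw [elim_toUpper I K J x a hxa, elim_toUpper I K J y b hyb]
        exact h2 a b hab
      · rw [elim_toLower I K J x a hxa, elim_toLower I K J y b hyb]
        exact h1 a b hab
    | refl => rfl
    | symm _ _ _ ih => exact ih.symm
    | trans _ _ _ _ _ ih1 ih2 => exact ih1.trans ih2
  · intro H
    constructor
    · intro a b hab
      obtain ⟨x, hx⟩ := toUpper_surj m l k a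
      obtain ⟨y, hy⟩ := toUpper_surj m l k b
      have := H x y (Relation.EqvGen.rel _ _ (Or.inl ⟨a, b, hx, hy, hab⟩))
      rwa [elim_toUpper I K J x a hx, elim_toUpper I K J y b hy] at this
    · intro a b hab
      obtain ⟨x, hx⟩ := toLower_surj m l k a
      obtain ⟨y, hy⟩ := toLower_surj m l k b
      have := H x y (Relation.EqvGen.rel _ _ (Or.inr ⟨a, b, hx, hy, hab⟩))
      rwa [elim_toLower I K J x a hx, elim_toLower I K J y b hy] at this

lemma emb_append {n m l k : ℕ} (I : Fin m → Fin n) (K : Fin l → Fin n) (J : Fin k → Fin n)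
    (z : Fin (m + k)) :
    Sum.elim I (Sum.elim K J) (embMK m l k z) = Fin.append I J z := by
  refine Fin.addCases (fun a => ?_) (fun c => ?_) z
  · simp [embMK, Fin.append_left]
  · simp [embMK, Fin.append_right]

lemma notB_emb {m l k : ℕ} : ∀ x : Fin m ⊕ (Fin l ⊕ Fin k),
    (¬∃ b : Fin l, x = Sum.inr (Sum.inl b)) → ∃ z : Fin (m + k), embMK m l k z = x
  | Sum.inl a, _ => ⟨Fin.castAdd k a, by simp [embMK]⟩
  | Sum.inr (Sum.inl b), h => absurd ⟨b, rfl⟩ h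
  | Sum.inr (Sum.inr c), _ => ⟨Fin.natAdd m c, by simp [embMK]⟩

lemma count_key (n k l m : ℕ) (hn : 0 < n)
    (π₁ : Setoid (Fin (l + k))) (π₂ : Setoid (Fin (m + l)))
    (I : Fin m → Fin n) (J : Fin k → Fin n) :
    Nat.card {K : Fin l → Fin n // ∀ x y,
        Relation.EqvGen (glue m l k π₂ π₁) x y →
        Sum.elim I (Sum.elim K J) x = Sum.elim I (Sum.elim K J) y} =
      n ^ removedCount m l k π₂ π₁ *
        (if ∀ x y, (compSetoid m l k π₂ π₁).r x y → Fin.append I J x = Fin.append I J y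
         then 1 else 0) := by
  set S := Relation.EqvGen.setoid (glue m l k π₂ π₁) with hSdef
  by_cases hIJ : ∀ x y, (compSetoid m l k π₂ π₁).r x y → Fin.append I J x = Fin.append I J y
  · rw [if_pos hIJ, mul_one]
    set f0 : Fin m ⊕ (Fin l ⊕ Fin k) → Fin n :=
      Sum.elim I (Sum.elim (fun _ => (⟨0, hn⟩ : Fin n)) J) with hf0def
    have hf0 : ∀ x y, (¬∃ b : Fin l, x = Sum.inr (Sum.inl b)) →
        (¬∃ b : Fin l, y = Sum.inr (Sum.inl b)) →
        Quotient.mk S x = Quotient.mk S y → f0 x = f0 y := by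
      intro x y hx hy hxy
      obtain ⟨z, rfl⟩ := notB_emb x hx
      obtain ⟨w, rfl⟩ := notB_emb y hy
      have hE : Relation.EqvGen (glue m l k π₂ π₁) (embMK m l k z) (embMK m l k w) :=
        Quotient.exact hxy
      have := hIJ z w ((comp_r π₂ π₁ z w).mpr hE)
      rw [hf0def, emb_append, emb_append]
      exact this
    have hrep : ∀ q : Quotient S,
        ¬(∀ x, Quotient.mk S x = q → ∃ b : Fin l, x = Sum.inr (Sum.inl b)) →
        ∃ x, Quotient.mk S x = q ∧ ¬∃ b : Fin l, x = Sum.inr (Sum.inl b) := by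
      intro q hq; push_neg at hq
      obtain ⟨x, hx1, hx2⟩ := hq
      exact ⟨x, hx1, by push_neg; exact hx2⟩
    set P := {q : Quotient S // ∀ x, Quotient.mk S x = q → ∃ b : Fin l, x = Sum.inr (Sum.inl b)}
      with hPdef
    set val : (P → Fin n) → Quotient S → Fin n := fun h q =>
      dite (∀ x, Quotient.mk S x = q → ∃ b : Fin l, x = Sum.inr (Sum.inl b))
        (fun hq => h ⟨q, hq⟩)
        (fun hq => f0 (Classical.choose (hrep q hq))) with hvaldef
    have hval_notB : ∀ (h : P → Fin n) (q : Quotient S) (x),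
        Quotient.mk S x = q → (¬∃ b : Fin l, x = Sum.inr (Sum.inl b)) → val h q = f0 x := by
      intro h q x hx hxB
      have hq : ¬(∀ y, Quotient.mk S y = q → ∃ b : Fin l, y = Sum.inr (Sum.inl b)) :=
        fun hall => hxB (hall x hx)
      rw [hvaldef]
      simp only [dif_neg hq]
      obtain ⟨hx', hB'⟩ := Classical.choose_spec (hrep q hq)
      exact hf0 _ x hB' hxB (hx'.trans hx.symm)
    set Kof : (P → Fin n) → Fin l → Fin n :=
      fun h b => val h (Quotient.mk S (Sum.inr (Sum.inl b))) with hKofdef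
    have hg : ∀ (h : P → Fin n) (x),
        Sum.elim I (Sum.elim (Kof h) J) x = val h (Quotient.mk S x) := by
      intro h x
      match x with
      | Sum.inl a =>
        rw [hval_notB h _ (Sum.inl a) rfl (by simp)]
        rfl
      | Sum.inr (Sum.inl b) => rfl
      | Sum.inr (Sum.inr c) =>
        rw [hval_notB h _ (Sum.inr (Sum.inr c)) rfl (by simp)]
        rfl
    have cond_Kof : ∀ h : P → Fin n, ∀ x y, Relation.EqvGen (glue m l k π₂ π₁) x y →
        Sum.elim I (Sum.elim (Kof h) J) x = Sum.elim I (Sum.elim (Kof h) J) y := by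
      intro h x y hxy
      rw [hg, hg]
      have : Quotient.mk S x = Quotient.mk S y := Quotient.sound hxy
      rw [this]
    set F : (P → Fin n) → {K : Fin l → Fin n // ∀ x y,
        Relation.EqvGen (glue m l k π₂ π₁) x y →
        Sum.elim I (Sum.elim K J) x = Sum.elim I (Sum.elim K J) y} :=
      fun h => ⟨Kof h, cond_Kof h⟩ with hFdef
    have hinj : Function.Injective F := by
      intro h h' hFh
      funext q
      obtain ⟨q, hq⟩ := q
      obtain ⟨x0, hx0⟩ := Quotient.exists_rep q
      obtain ⟨b, hb⟩ := hq x0 hx0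
      subst hb
      have h1 : Kof h b = Kof h' b := congrFun (congrArg Subtype.val hFh) b
      rw [hKofdef] at h1
      simp only at h1
      rw [hx0] at h1
      rw [hvaldef] at h1
      simpa only [dif_pos hq] using h1
    have hsurj : Function.Surjective F := by
      rintro ⟨K, hK⟩
      have pick : ∀ q : P, ∃ b : Fin l, Quotient.mk S (Sum.inr (Sum.inl b)) = q.1 := by
        rintro ⟨q, hq⟩
        obtain ⟨x0, hx0⟩ := Quotient.exists_rep q
        obtain ⟨b, hb⟩ := hq x0 hx0
        subst hb
        exact ⟨b, hx0⟩
      have hf0g : ∀ x, (¬∃ b : Fin l, x = Sum.inr (Sum.inl b)) →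
          f0 x = Sum.elim I (Sum.elim K J) x := by
        intro x hx
        match x with
        | Sum.inl a => rfl
        | Sum.inr (Sum.inl b) => exact absurd ⟨b, rfl⟩ hx
        | Sum.inr (Sum.inr c) => rfl
      refine ⟨fun q => K (Classical.choose (pick q)), ?_⟩
      apply Subtype.ext
      funext b
      show Kof (fun q => K (Classical.choose (pick q))) b = K b
      rw [hKofdef]
      simp only
      by_cases hq : ∀ x, Quotient.mk S x = Quotient.mk S (Sum.inr (Sum.inl b)) →
          ∃ b' : Fin l, x = Sum.inr (Sum.inl b')
      · rw [hvaldef]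
        simp only [dif_pos hq]
        have hb' := Classical.choose_spec (pick ⟨Quotient.mk S (Sum.inr (Sum.inl b)), hq⟩)
        exact hK _ _ (Quotient.exact hb')
      · rw [hvaldef]
        simp only [dif_neg hq]
        obtain ⟨hx0, hx0B⟩ := Classical.choose_spec (hrep _ hq)
        rw [hf0g _ hx0B]
        exact hK _ _ (Quotient.exact hx0)
    have hbij : Function.Bijective F := ⟨hinj, hsurj⟩
    rw [← Nat.card_eq_of_bijective F hbij, Nat.card_fun]
    have h1 : Nat.card (Fin n) = n := by simp
    rw [h1]
    rfl
  · rw [if_neg hIJ, mul_zero]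
    push_neg at hIJ
    obtain ⟨x, y, hxy, hne⟩ := hIJ
    have : IsEmpty {K : Fin l → Fin n // ∀ x y,
        Relation.EqvGen (glue m l k π₂ π₁) x y →
        Sum.elim I (Sum.elim K J) x = Sum.elim I (Sum.elim K J) y} := by
      refine ⟨fun ⟨K, hK⟩ => hne ?_⟩
      have := hK _ _ ((comp_r π₂ π₁ x y).mp hxy)
      rwa [emb_append, emb_append] at this
    exact Nat.card_of_isEmpty

/-- `D_{π₂} ∘ D_{π₁} = n^{c(π₂,π₁)} · D_{π₂∘π₁}`. -/
theorem Dmat_comp (n k l m : ℕ) (hn : 0 < n)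
    (π₁ : Setoid (Fin (l + k))) (π₂ : Setoid (Fin (m + l))) :
    Dmat n m l π₂ * Dmat n l k π₁ =
      (n : ℝ) ^ removedCount m l k π₂ π₁ • Dmat n m k (compSetoid m l k π₂ π₁) := by
  ext I J
  rw [Matrix.mul_apply, Matrix.smul_apply]
  simp only [Dmat, Matrix.of_apply, smul_eq_mul]
  have step : ∀ K : Fin l → Fin n,
      (if ∀ x y, π₂.r x y → Fin.append I K x = Fin.append I K y then (1 : ℝ) else 0) *
      (if ∀ x y, π₁.r x y → Fin.append K J x = Fin.append K J y then (1 : ℝ) else 0) =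
      if (∀ x y, Relation.EqvGen (glue m l k π₂ π₁) x y →
          Sum.elim I (Sum.elim K J) x = Sum.elim I (Sum.elim K J) y) then (1 : ℝ) else 0 := by
    intro K
    by_cases hc : ∀ x y, Relation.EqvGen (glue m l k π₂ π₁) x y →
        Sum.elim I (Sum.elim K J) x = Sum.elim I (Sum.elim K J) y
    · obtain ⟨h2, h1⟩ := (glue_iff π₂ π₁ I K J).mpr hc
      rw [if_pos hc, if_pos h2, if_pos h1, one_mul]
    · rw [if_neg hc]
      by_cases h2 : ∀ x y, π₂.r x y → Fin.append I K x = Fin.append I K y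
      · have h1 : ¬∀ x y, π₁.r x y → Fin.append K J x = Fin.append K J y :=
          fun h1 => hc ((glue_iff π₂ π₁ I K J).mp ⟨h2, h1⟩)
        rw [if_pos h2, if_neg h1, mul_zero]
      · rw [if_neg h2, zero_mul]
  rw [Finset.sum_congr rfl (fun K _ => step K), Finset.sum_boole]
  have hcount := count_key n k l m hn π₁ π₂ I J
  rw [Nat.card_eq_fintype_card, Fintype.card_subtype] at hcount
  rw [hcount]
  push_cast [apply_ite ((↑·) : ℕ → ℝ)]
  ring
end
end

section
/- For every (k,l)-Brauer diagram, i.e. every perfect matching β of [l+k], the linear map E_β : (ℝⁿ)^{⊗k} → (ℝⁿ)^{⊗l} is O(n)-equivariant: g^{⊗l} ∘ E_β = E_β ∘ g^{⊗k} for every orthogonal matrix g ∈ O(n). -/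
open Classical
noncomputable section

/-- The set partition whose blocks are the pairs `{x, f x}` of a (fixed-point-free)
involution `f`, i.e. a perfect matching of `Fin N`. -/
def matchingSetoid {N : ℕ} (f : Fin N → Fin N) (hf : ∀ x, f (f x) = x) : Setoid (Fin N) where
  r x y := y = x ∨ y = f x
  iseqv := by
    constructor
    · intro x; exact Or.inl rfl
    · rintro x y (rfl | rfl)
      · exact Or.inl rfl
      · right; rw [hf]
    · rintro x y z (rfl | rfl) h
      · exact h
      · rcases h with rfl | rfl
        · right; rfl
        · left; rw [hf]

/-- Per-pair weight. -/
def wgt {ι : Type} {n : ℕ} (f : ι → ι) (h : ι → Fin n → ℝ) (S : Finset ι) (u : ι → Fin n)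
    (x : ι) : ℝ :=
  if x ∈ S then
    (if f x ∈ S then ∑ c, h x c * h (f x) c else h x (u (f x)))
  else
    (if f x ∈ S then h (f x) (u x)
     else if u x = u (f x) then (1:ℝ) else 0)

/-- Summand of the pinned partition-function. -/
def smnd {ι : Type} {n : ℕ} (f : ι → ι) (h : ι → Fin n → ℝ) (S : Finset ι) (u : ι → Fin n)
    (V : ι → Fin n) : ℝ :=
  (∏ x ∈ S, h x (V x)) *
    ((if ∀ x ∉ S, V x = u x then (1:ℝ) else 0) * (if ∀ x, V (f x) = V x then (1:ℝ) else 0))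

lemma wgt_congr {ι : Type} {n : ℕ} (f : ι → ι) (h : ι → Fin n → ℝ) {S S' : Finset ι}
    {u u' : ι → Fin n} {x : ι} (h1 : x ∈ S' ↔ x ∈ S) (h2 : f x ∈ S' ↔ f x ∈ S)
    (h3 : u' x = u x) (h4 : u' (f x) = u (f x)) :
    wgt f h S' u' x = wgt f h S u x := by
  unfold wgt
  by_cases a : x ∈ S
  · rw [if_pos a, if_pos (h1.mpr a)]
    by_cases b : f x ∈ S
    · rw [if_pos b, if_pos (h2.mpr b)]
    · rw [if_neg b, if_neg (fun hb => b (h2.mp hb)), h4]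
  · rw [if_neg a, if_neg (fun ha => a (h1.mp ha))]
    by_cases b : f x ∈ S
    · rw [if_pos b, if_pos (h2.mpr b), h3]
    · rw [if_neg b, if_neg (fun hb => b (h2.mp hb)), h3, h4]

lemma pair_ne {ι : Type} (f : ι → ι) (hf : ∀ x, f (f x) = x) {x z : ι}
    (h1 : x ≠ z) (h2 : x ≠ f z) : f x ≠ z ∧ f x ≠ f z :=
  ⟨fun e => h2 (by rw [← e, hf]), fun e => h1 (by have := congrArg f e; rwa [hf, hf] at this)⟩

section Core
variable {N n : ℕ}
variable (f : Fin N → Fin N) (h : Fin N → Fin n → ℝ)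

/-- Inductive step: both members of the pair `{x₀, f x₀}` are free. -/
lemma core_step_pair (hf : ∀ x, f (f x) = x) (hf' : ∀ x, f x ≠ x) (S : Finset (Fin N))
    (ih : ∀ T ⊂ S, ∀ u : Fin N → Fin n, (∑ V : Fin N → Fin n, smnd f h T u V)
        = ∏ x ∈ Finset.univ.filter (fun x => x < f x), wgt f h T u x)
    (u : Fin N → Fin n) (x₀ : Fin N) (hx₀ : x₀ ∈ S) (hfx : f x₀ ∈ S) (hlt : x₀ < f x₀) :
    (∑ V : Fin N → Fin n, smnd f h S u V)
      = ∏ x ∈ Finset.univ.filter (fun x => x < f x), wgt f h S u x := by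
  have hne : x₀ ≠ f x₀ := ne_of_lt hlt
  set S'' : Finset (Fin N) := (S.erase x₀).erase (f x₀) with hS''
  have hmem'' : ∀ x, x ∈ S'' ↔ x ≠ f x₀ ∧ x ≠ x₀ ∧ x ∈ S := by
    intro x; simp [hS'', Finset.mem_erase]
  have hSsub : S'' ⊂ S :=
    lt_of_le_of_lt (Finset.erase_subset _ _) (Finset.erase_ssubset hx₀)
  set u'' : Fin n → Fin N → Fin n :=
    fun c => Function.update (Function.update u x₀ c) (f x₀) c with hu''
  have hu''x₀ : ∀ c, u'' c x₀ = c := by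
    intro c; rw [hu'']; simp only []
    rw [Function.update_of_ne hne, Function.update_self]
  have hu''fx₀ : ∀ c, u'' c (f x₀) = c := by
    intro c; rw [hu'']; simp only []
    rw [Function.update_self]
  have hu''other : ∀ c x, x ≠ x₀ → x ≠ f x₀ → u'' c x = u x := by
    intro c x hx1 hx2; rw [hu'']; simp only []
    rw [Function.update_of_ne hx2, Function.update_of_ne hx1]
  have hx₀n'' : x₀ ∉ S'' := by simp [hmem'']
  have hfx₀n'' : f x₀ ∉ S'' := by simp [hmem'']
  -- pointwise identity
  have key : ∀ V : Fin N → Fin n,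
      smnd f h S u V = ∑ c, (h x₀ c * h (f x₀) c) * smnd f h S'' (u'' c) V := by
    intro V
    by_cases hcond : ∀ x, V (f x) = V x
    · by_cases hpin : ∀ x ∉ S, V x = u x
      · have hVfx : V (f x₀) = V x₀ := hcond x₀
        unfold smnd
        rw [if_pos hcond, if_pos hpin, mul_one, mul_one]
        rw [Finset.sum_eq_single (V x₀)]
        · have hpin'' : ∀ x ∉ S'', V x = u'' (V x₀) x := by
            intro x hx
            by_cases hx1 : x = x₀
            · subst hx1; rw [hu''x₀]
            · by_cases hx2 : x = f x₀
              · subst hx2; rw [hu''fx₀, hVfx]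
              · have hxS : x ∉ S := fun hmem => hx ((hmem'' x).mpr ⟨hx2, hx1, hmem⟩)
                rw [hpin x hxS, hu''other _ _ hx1 hx2]
          rw [if_pos hpin'', mul_one, mul_one]
          rw [← Finset.mul_prod_erase S _ hx₀,
            ← Finset.mul_prod_erase _ _ (Finset.mem_erase.mpr ⟨(Ne.symm hne), hfx⟩), hVfx]
          ring
        · intro c _ hc
          have hne' : ¬ ∀ x ∉ S'', V x = u'' c x := fun hp =>
            hc (((hp x₀ hx₀n'').trans (hu''x₀ c)).symm)
          rw [if_neg hne', zero_mul, mul_zero, mul_zero]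
        · intro hV; exact absurd (Finset.mem_univ _) hV
      · unfold smnd
        push_neg at hpin
        obtain ⟨x, hxS, hVx⟩ := hpin
        have hx1 : x ≠ x₀ := fun e => hxS (e ▸ hx₀)
        have hx2 : x ≠ f x₀ := fun e => hxS (e ▸ hfx)
        have : ∀ c, ¬ ∀ y ∉ S'', V y = u'' c y := by
          intro c hp
          have hxS'' : x ∉ S'' := fun hmem => hxS ((hmem'' x).mp hmem).2.2
          exact hVx ((hp x hxS'').trans (hu''other c x hx1 hx2))
        rw [if_neg (by push_neg; exact ⟨x, hxS, hVx⟩), zero_mul, mul_zero]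
        symm; apply Finset.sum_eq_zero
        intro c _
        rw [if_neg (this c), zero_mul, mul_zero, mul_zero]
    · unfold smnd
      rw [if_neg hcond, mul_zero, mul_zero]
      symm
      apply Finset.sum_eq_zero
      intro c _
      rw [mul_zero, mul_zero, mul_zero]
  have hy : x₀ ∈ Finset.univ.filter (fun x => x < f x) := by
    simp [hlt]
  calc (∑ V : Fin N → Fin n, smnd f h S u V)
      = ∑ V : Fin N → Fin n, ∑ c, (h x₀ c * h (f x₀) c) * smnd f h S'' (u'' c) V :=
        Finset.sum_congr rfl (fun V _ => key V)
    _ = ∑ c, ∑ V : Fin N → Fin n, (h x₀ c * h (f x₀) c) * smnd f h S'' (u'' c) V :=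
        Finset.sum_comm
    _ = ∑ c, (h x₀ c * h (f x₀) c) * ∑ V : Fin N → Fin n, smnd f h S'' (u'' c) V := by
        refine Finset.sum_congr rfl (fun c _ => ?_); rw [Finset.mul_sum]
    _ = ∑ c, (h x₀ c * h (f x₀) c) *
          ∏ x ∈ Finset.univ.filter (fun x => x < f x), wgt f h S'' (u'' c) x := by
        refine Finset.sum_congr rfl (fun c _ => ?_); rw [ih S'' hSsub]
    _ = ∏ x ∈ Finset.univ.filter (fun x => x < f x), wgt f h S u x := by
        have hw1 : ∀ c, ∀ x ∈ (Finset.univ.filter (fun x => x < f x)).erase x₀,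
            wgt f h S'' (u'' c) x = wgt f h S u x := by
          intro c x hx
          obtain ⟨hxy, hxmem⟩ := Finset.mem_erase.mp hx
          have hxlt : x < f x := (Finset.mem_filter.mp hxmem).2
          have hx2 : x ≠ f x₀ := by
            rintro rfl
            rw [hf] at hxlt
            exact absurd hxlt (not_lt.mpr hlt.le)
          obtain ⟨hfx1, hfx2⟩ := pair_ne f hf hxy hx2
          exact wgt_congr f h
            (by rw [hmem'' x]; simp [hx2, hxy])
            (by rw [hmem'' (f x)]; simp [hfx2, hfx1])
            (hu''other c x hxy hx2) (hu''other c (f x) hfx1 hfx2)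
        have hw2 : ∀ c, wgt f h S'' (u'' c) x₀ = 1 := by
          intro c
          unfold wgt
          rw [if_neg hx₀n'', if_neg hfx₀n'', if_pos ((hu''x₀ c).trans (hu''fx₀ c).symm)]
        rw [← Finset.mul_prod_erase _ _ hy]
        have : ∀ c, (∏ x ∈ Finset.univ.filter (fun x => x < f x), wgt f h S'' (u'' c) x)
            = ∏ x ∈ (Finset.univ.filter (fun x => x < f x)).erase x₀, wgt f h S u x := by
          intro c
          rw [← Finset.mul_prod_erase _ _ hy, hw2, one_mul]
          exact Finset.prod_congr rfl (hw1 c)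
        calc ∑ c, (h x₀ c * h (f x₀) c) *
              ∏ x ∈ Finset.univ.filter (fun x => x < f x), wgt f h S'' (u'' c) x
            = ∑ c, (h x₀ c * h (f x₀) c) *
              ∏ x ∈ (Finset.univ.filter (fun x => x < f x)).erase x₀, wgt f h S u x := by
              refine Finset.sum_congr rfl (fun c _ => ?_); rw [this c]
          _ = (∑ c, h x₀ c * h (f x₀) c) *
              ∏ x ∈ (Finset.univ.filter (fun x => x < f x)).erase x₀, wgt f h S u x := by
              rw [Finset.sum_mul]
          _ = wgt f h S u x₀ *
              ∏ x ∈ (Finset.univ.filter (fun x => x < f x)).erase x₀, wgt f h S u x := by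
              unfold wgt; rw [if_pos hx₀, if_pos hfx]

/-- Inductive step: `x₀` is free but its partner `f x₀` is pinned. -/
lemma core_step_single (hf : ∀ x, f (f x) = x) (hf' : ∀ x, f x ≠ x) (S : Finset (Fin N))
    (ih : ∀ T ⊂ S, ∀ u : Fin N → Fin n, (∑ V : Fin N → Fin n, smnd f h T u V)
        = ∏ x ∈ Finset.univ.filter (fun x => x < f x), wgt f h T u x)
    (u : Fin N → Fin n) (x₀ : Fin N) (hx₀ : x₀ ∈ S) (hfx : f x₀ ∉ S) :
    (∑ V : Fin N → Fin n, smnd f h S u V)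
      = ∏ x ∈ Finset.univ.filter (fun x => x < f x), wgt f h S u x := by
  have hne : x₀ ≠ f x₀ := fun e => hf' x₀ e.symm
  set S' : Finset (Fin N) := S.erase x₀ with hS'
  have hmem' : ∀ x, x ∈ S' ↔ x ≠ x₀ ∧ x ∈ S := by
    intro x; simp [hS', Finset.mem_erase]
  have hSsub : S' ⊂ S := Finset.erase_ssubset hx₀
  set u' : Fin N → Fin n := Function.update u x₀ (u (f x₀)) with hu'
  have hu'x₀ : u' x₀ = u (f x₀) := by rw [hu']; exact Function.update_self _ _ _
  have hu'other : ∀ x, x ≠ x₀ → u' x = u x := by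
    intro x hx1; rw [hu']; exact Function.update_of_ne hx1 _ _
  have hx₀n' : x₀ ∉ S' := by simp [hmem']
  have hfx₀n' : f x₀ ∉ S' := by
    intro hmem; exact hfx ((hmem' _).mp hmem).2
  have key : ∀ V : Fin N → Fin n,
      smnd f h S u V = h x₀ (u (f x₀)) * smnd f h S' u' V := by
    intro V
    by_cases hcond : ∀ x, V (f x) = V x
    · by_cases hpin : ∀ x ∉ S, V x = u x
      · have hVx₀ : V x₀ = u (f x₀) := (hcond x₀).symm.trans (hpin _ hfx)
        have hpin' : ∀ x ∉ S', V x = u' x := by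
          intro x hx
          by_cases hxx : x = x₀
          · subst hxx; rw [hVx₀, hu'x₀]
          · have hxS : x ∉ S := fun hmem => hx ((hmem' x).mpr ⟨hxx, hmem⟩)
            rw [hpin x hxS, hu'other x hxx]
        unfold smnd
        rw [if_pos hcond, if_pos hpin, if_pos hpin']
        simp only [mul_one]
        rw [← Finset.mul_prod_erase S _ hx₀, hVx₀]
      · have hpin'f : ¬ ∀ x ∉ S', V x = u' x := by
          intro hp
          apply hpin
          intro x hx
          have hx' : x ∉ S' := fun hm => hx (Finset.mem_of_mem_erase hm)
          have hxx : x ≠ x₀ := fun e => hx (e ▸ hx₀)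
          rw [hp x hx', hu'other x hxx]
        unfold smnd
        rw [if_neg hpin, if_neg hpin'f]
        ring
    · unfold smnd
      rw [if_neg hcond]
      ring
  -- the representative of the pair {x₀, f x₀}
  obtain ⟨y, hy1, hylt⟩ :
      ∃ y, ((y = x₀ ∧ f y = f x₀) ∨ (y = f x₀ ∧ f y = x₀)) ∧ y < f y := by
    rcases lt_or_gt_of_ne (hf' x₀) with hl | hl
    · exact ⟨f x₀, Or.inr ⟨rfl, hf x₀⟩, by rw [hf]; exact hl⟩
    · exact ⟨x₀, Or.inl ⟨rfl, rfl⟩, hl⟩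
  have hymem : y ∈ Finset.univ.filter (fun x => x < f x) := by simp [hylt]
  have hw2 : wgt f h S' u' y = 1 := by
    have hyn : y ∉ S' := by rcases hy1 with ⟨rfl, -⟩ | ⟨rfl, -⟩ <;> assumption
    have hfyn : f y ∉ S' := by
      rcases hy1 with ⟨-, e⟩ | ⟨-, e⟩ <;> rw [e] <;> assumption
    have hueq : u' y = u' (f y) := by
      rcases hy1 with ⟨rfl, e⟩ | ⟨rfl, e⟩ <;> rw [e]
      · rw [hu'x₀, hu'other _ (Ne.symm hne)]
      · rw [hu'x₀, hu'other _ (Ne.symm hne)]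
    unfold wgt
    rw [if_neg hyn, if_neg hfyn, if_pos hueq]
  have hwy : wgt f h S u y = h x₀ (u (f x₀)) := by
    rcases hy1 with ⟨rfl, e⟩ | ⟨rfl, e⟩
    · unfold wgt; rw [if_pos hx₀, e, if_neg hfx]
    · unfold wgt; rw [e, if_neg hfx, if_pos hx₀]
  have hw1 : ∀ x ∈ (Finset.univ.filter (fun x => x < f x)).erase y,
      wgt f h S' u' x = wgt f h S u x := by
    intro x hx
    obtain ⟨hxy, hxmem⟩ := Finset.mem_erase.mp hx
    have hxlt : x < f x := (Finset.mem_filter.mp hxmem).2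
    have hx1 : x ≠ x₀ := by
      rintro rfl
      rcases hy1 with ⟨e, -⟩ | ⟨e, -⟩
      · exact hxy e.symm
      · rw [e, hf] at hylt
        exact lt_asymm hxlt hylt
    have hx2 : x ≠ f x₀ := by
      rintro rfl
      rcases hy1 with ⟨e, e2⟩ | ⟨e, -⟩
      · rw [hf] at hxlt
        rw [e] at hylt
        exact lt_asymm hxlt hylt
      · exact hxy e.symm
    obtain ⟨hfx1, hfx2⟩ := pair_ne f hf hx1 hx2
    exact wgt_congr f h
      (by rw [hmem' x]; simp [hx1])
      (by rw [hmem' (f x)]; simp [hfx1])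
      (hu'other x hx1) (hu'other (f x) hfx1)
  calc (∑ V : Fin N → Fin n, smnd f h S u V)
      = ∑ V : Fin N → Fin n, h x₀ (u (f x₀)) * smnd f h S' u' V :=
        Finset.sum_congr rfl (fun V _ => key V)
    _ = h x₀ (u (f x₀)) * ∑ V : Fin N → Fin n, smnd f h S' u' V := by rw [Finset.mul_sum]
    _ = h x₀ (u (f x₀)) * ∏ x ∈ Finset.univ.filter (fun x => x < f x), wgt f h S' u' x := by
        rw [ih S' hSsub]
    _ = ∏ x ∈ Finset.univ.filter (fun x => x < f x), wgt f h S u x := by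
        rw [← Finset.mul_prod_erase _ _ hymem, hw2, one_mul,
          Finset.prod_congr rfl hw1, ← Finset.mul_prod_erase _ (wgt f h S u) hymem, hwy]

/-- The core factorization lemma. -/
lemma core (hf : ∀ x, f (f x) = x) (hf' : ∀ x, f x ≠ x) (S : Finset (Fin N)) :
    ∀ u : Fin N → Fin n,
    (∑ V : Fin N → Fin n, smnd f h S u V)
      = ∏ x ∈ Finset.univ.filter (fun x => x < f x), wgt f h S u x := by
  induction S using Finset.strongInduction with
  | _ S ih =>
  intro u
  rcases S.eq_empty_or_nonempty with rfl | ⟨x₀, hx₀⟩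
  · rw [Finset.sum_eq_single u]
    · unfold smnd
      rw [Finset.prod_empty, if_pos (fun x _ => rfl), one_mul, one_mul]
      by_cases hcu : ∀ x, u (f x) = u x
      · rw [if_pos hcu]
        symm
        apply Finset.prod_eq_one
        intro x _
        unfold wgt
        rw [if_neg (Finset.notMem_empty x), if_neg (Finset.notMem_empty (f x)),
          if_pos (hcu x).symm]
      · rw [if_neg hcu]
        symm
        push_neg at hcu
        obtain ⟨x, hx⟩ := hcu
        rcases lt_trichotomy x (f x) with hlt | heq | hgt
        · apply Finset.prod_eq_zero (i := x) (by simp [hlt])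
          unfold wgt
          rw [if_neg (Finset.notMem_empty x), if_neg (Finset.notMem_empty (f x)),
            if_neg (fun e => hx e.symm)]
        · exact absurd heq.symm (hf' x)
        · have h1 : f x < f (f x) := by rw [hf]; exact hgt
          apply Finset.prod_eq_zero (i := f x) (by simp [h1])
          unfold wgt
          rw [if_neg (Finset.notMem_empty (f x)), if_neg (Finset.notMem_empty (f (f x)))]
          rw [if_neg (show ¬ u (f x) = u (f (f x)) by rw [hf]; exact hx)]
    · intro V _ hV
      unfold smnd
      rw [if_neg (fun hp => hV (funext fun x => hp x (Finset.notMem_empty x)))]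
      ring
    · intro hu; exact absurd (Finset.mem_univ _) hu
  · by_cases hfx : f x₀ ∈ S
    · rcases lt_or_gt_of_ne (hf' x₀).symm with hl | hl
      · exact core_step_pair f h hf hf' S ih u x₀ hx₀ hfx hl
      · have h1 : f x₀ < f (f x₀) := by rw [hf]; exact hl
        have h2 : f (f x₀) ∈ S := by rw [hf]; exact hx₀
        exact core_step_pair f h hf hf' S ih u (f x₀) hfx h2 h1
    · exact core_step_single f h hf hf' S ih u x₀ hx₀ hfx

end Core

section Bridge
variable {n l k : ℕ}

lemma stop_eq_image :
    (Finset.univ.filter (fun x : Fin (l + k) => (x : ℕ) < l))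
      = Finset.univ.image (Fin.castAdd k) := by
  ext x
  simp only [Finset.mem_filter, Finset.mem_univ, true_and, Finset.mem_image]
  constructor
  · intro hx
    exact ⟨⟨(x : ℕ), hx⟩, Fin.ext rfl⟩
  · rintro ⟨i, rfl⟩
    simpa using i.isLt

lemma sbot_eq_image :
    (Finset.univ.filter (fun x : Fin (l + k) => ¬ (x : ℕ) < l))
      = Finset.univ.image (Fin.natAdd l) := by
  ext x
  simp only [Finset.mem_filter, Finset.mem_univ, true_and, Finset.mem_image]
  constructor
  · intro hx
    refine ⟨⟨(x : ℕ) - l, by omega⟩, Fin.ext ?_⟩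
    simp only [Fin.natAdd]
    omega
  · rintro ⟨j, rfl⟩
    simp only [Fin.coe_natAdd]
    omega

lemma castAdd_inj : Function.Injective (fun i : Fin l => Fin.castAdd k i) := by
  intro a b hab
  have := congrArg Fin.val hab
  exact Fin.ext (by simpa using this)

lemma natAdd_inj : Function.Injective (fun j : Fin k => Fin.natAdd l j) := by
  intro a b hab
  have := congrArg Fin.val hab
  simp only [Fin.coe_natAdd] at this
  exact Fin.ext (by omega)

lemma bridgeL (f : Fin (l + k) → Fin (l + k)) (g : Matrix (Fin n) (Fin n) ℝ)
    (I : Fin l → Fin n) (J : Fin k → Fin n) :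
    (∑ A : Fin l → Fin n, (∏ i, g (I i) (A i)) *
        (if ∀ x, Fin.append A J (f x) = Fin.append A J x then (1:ℝ) else 0))
    = ∑ V : Fin (l + k) → Fin n,
        smnd f (fun x c => g (Fin.append I J x) c)
          (Finset.univ.filter (fun x : Fin (l + k) => (x : ℕ) < l)) (Fin.append I J) V := by
  symm
  set Stop := Finset.univ.filter (fun x : Fin (l + k) => (x : ℕ) < l) with hStop
  have hnotmem : ∀ x : Fin (l + k), x ∉ Stop ↔ ¬ ((x : ℕ) < l) := by
    intro x; simp [hStop]
  have hpin_iff : ∀ V : Fin (l + k) → Fin n,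
      (∀ x ∉ Stop, V x = Fin.append I J x) ↔ (∀ j : Fin k, V (Fin.natAdd l j) = J j) := by
    intro V
    constructor
    · intro hp j
      have hm : (Fin.natAdd l j : Fin (l + k)) ∉ Stop := by
        rw [hnotmem]; simp only [Fin.coe_natAdd]; omega
      rw [hp _ hm, Fin.append_right]
    · intro hp x hx
      rw [hnotmem] at hx
      obtain ⟨j, rfl⟩ : ∃ j : Fin k, x = Fin.natAdd l j :=
        ⟨⟨(x : ℕ) - l, by omega⟩, Fin.ext (by simp only [Fin.coe_natAdd]; omega)⟩
      rw [hp j, Fin.append_right]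
  have hsum1 : ∀ V : Fin (l + k) → Fin n,
      smnd f (fun x c => g (Fin.append I J x) c) Stop (Fin.append I J) V
        = if (∀ j : Fin k, V (Fin.natAdd l j) = J j) then
            (∏ x ∈ Stop, g (Fin.append I J x) (V x)) *
              (if ∀ x, V (f x) = V x then (1:ℝ) else 0)
          else 0 := by
    intro V
    unfold smnd
    by_cases hp : ∀ j : Fin k, V (Fin.natAdd l j) = J j
    · rw [if_pos hp, if_pos ((hpin_iff V).mpr hp), one_mul]
      congr 1
      by_cases hc : ∀ x : Fin (l + k), V (f x) = V x
      · rw [if_pos hc, if_pos hc]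
      · rw [if_neg hc, if_neg hc]
    · rw [if_neg hp, if_neg (fun hq => hp ((hpin_iff V).mp hq))]
      ring
  rw [Finset.sum_congr rfl (fun V _ => hsum1 V), ← Finset.sum_filter]
  apply Finset.sum_nbij' (i := fun V (i : Fin l) => V (Fin.castAdd k i))
    (j := fun A => Fin.append A J)
  · intro V _; exact Finset.mem_univ _
  · intro A _
    simp only [Finset.mem_filter, Finset.mem_univ, true_and]
    intro j; rw [Fin.append_right]
  · intro V hV
    simp only [Finset.mem_filter, Finset.mem_univ, true_and] at hV
    funext x
    refine Fin.addCases (fun i => ?_) (fun j => ?_) x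
    · rw [Fin.append_left]
    · rw [Fin.append_right, hV j]
  · intro A _
    funext i
    rw [Fin.append_left]
  · intro V hV
    simp only [Finset.mem_filter, Finset.mem_univ, true_and] at hV
    have hVapp : Fin.append (fun i => V (Fin.castAdd k i)) J = V := by
      funext x
      refine Fin.addCases (fun i => ?_) (fun j => ?_) x
      · rw [Fin.append_left]
      · rw [Fin.append_right, hV j]
    rw [hVapp]
    congr 1
    rw [hStop, stop_eq_image, Finset.prod_image (fun a _ b _ hab => castAdd_inj hab)]
    refine Finset.prod_congr rfl (fun i _ => ?_)
    rw [Fin.append_left]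

lemma bridgeR (f : Fin (l + k) → Fin (l + k)) (g : Matrix (Fin n) (Fin n) ℝ)
    (I : Fin l → Fin n) (J : Fin k → Fin n) :
    (∑ B : Fin k → Fin n,
        (if ∀ x, Fin.append I B (f x) = Fin.append I B x then (1:ℝ) else 0) *
          (∏ j, g (B j) (J j)))
    = ∑ V : Fin (l + k) → Fin n,
        smnd f (fun x c => g c (Fin.append I J x))
          (Finset.univ.filter (fun x : Fin (l + k) => ¬ (x : ℕ) < l)) (Fin.append I J) V := by
  symm
  set Sbot := Finset.univ.filter (fun x : Fin (l + k) => ¬ (x : ℕ) < l) with hSbot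
  have hnotmem : ∀ x : Fin (l + k), x ∉ Sbot ↔ (x : ℕ) < l := by
    intro x; simp [hSbot]
  have hpin_iff : ∀ V : Fin (l + k) → Fin n,
      (∀ x ∉ Sbot, V x = Fin.append I J x) ↔ (∀ i : Fin l, V (Fin.castAdd k i) = I i) := by
    intro V
    constructor
    · intro hp i
      have hm : (Fin.castAdd k i : Fin (l + k)) ∉ Sbot := by
        rw [hnotmem]; simpa using i.isLt
      rw [hp _ hm, Fin.append_left]
    · intro hp x hx
      rw [hnotmem] at hx
      obtain ⟨i, rfl⟩ : ∃ i : Fin l, x = Fin.castAdd k i := ⟨⟨(x : ℕ), hx⟩, Fin.ext rfl⟩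
      rw [hp i, Fin.append_left]
  have hsum1 : ∀ V : Fin (l + k) → Fin n,
      smnd f (fun x c => g c (Fin.append I J x)) Sbot (Fin.append I J) V
        = if (∀ i : Fin l, V (Fin.castAdd k i) = I i) then
            (∏ x ∈ Sbot, g (V x) (Fin.append I J x)) *
              (if ∀ x, V (f x) = V x then (1:ℝ) else 0)
          else 0 := by
    intro V
    unfold smnd
    by_cases hp : ∀ i : Fin l, V (Fin.castAdd k i) = I i
    · rw [if_pos hp, if_pos ((hpin_iff V).mpr hp), one_mul]
      congr 1
      by_cases hc : ∀ x : Fin (l + k), V (f x) = V x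
      · rw [if_pos hc, if_pos hc]
      · rw [if_neg hc, if_neg hc]
    · rw [if_neg hp, if_neg (fun hq => hp ((hpin_iff V).mp hq))]
      ring
  rw [Finset.sum_congr rfl (fun V _ => hsum1 V), ← Finset.sum_filter]
  apply Finset.sum_nbij' (i := fun V (j : Fin k) => V (Fin.natAdd l j))
    (j := fun B => Fin.append I B)
  · intro V _; exact Finset.mem_univ _
  · intro B _
    simp only [Finset.mem_filter, Finset.mem_univ, true_and]
    intro i; rw [Fin.append_left]
  · intro V hV
    simp only [Finset.mem_filter, Finset.mem_univ, true_and] at hV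
    funext x
    refine Fin.addCases (fun i => ?_) (fun j => ?_) x
    · rw [Fin.append_left, hV i]
    · rw [Fin.append_right]
  · intro B _
    funext j
    rw [Fin.append_right]
  · intro V hV
    simp only [Finset.mem_filter, Finset.mem_univ, true_and] at hV
    have hVapp : Fin.append I (fun j => V (Fin.natAdd l j)) = V := by
      funext x
      refine Fin.addCases (fun i => ?_) (fun j => ?_) x
      · rw [Fin.append_left, hV i]
      · rw [Fin.append_right]
    rw [hVapp]
    rw [mul_comm]
    congr 1
    rw [hSbot, sbot_eq_image, Finset.prod_image (fun a _ b _ hab => natAdd_inj hab)]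
    refine Finset.prod_congr rfl (fun j _ => ?_)
    rw [Fin.append_right]

end Bridge

/-- for every perfect matching `β` of `[l+k]` (encoded by a fixed-point-free
involution `f`), the map `E_β := D_β` is `O(n)`-equivariant:
`g^{⊗l} ∘ E_β = E_β ∘ g^{⊗k}` for every orthogonal matrix `g`. -/
theorem Ematrix_orthogonal_equivariant (n k l : ℕ) (hn : 0 < n)
    (f : Fin (l + k) → Fin (l + k)) (hf : ∀ x, f (f x) = x) (hf' : ∀ x, f x ≠ x)
    (g : Matrix (Fin n) (Fin n) ℝ) (hg : g.transpose * g = 1) :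
    tensorPow n l g * Dmat n l k (matchingSetoid f hf) =
      Dmat n l k (matchingSetoid f hf) * tensorPow n k g := by

  have hg2 : g * g.transpose = 1 := mul_eq_one_comm.mp hg
  ext I J
  rw [Matrix.mul_apply, Matrix.mul_apply]
  simp only [tensorPow, Dmat, Matrix.of_apply]
  have hsc : ∀ (W : Fin (l + k) → Fin n),
      (∀ x y, (matchingSetoid f hf).r x y → W x = W y) ↔ (∀ x, W (f x) = W x) := by
    intro W
    constructor
    · intro hc x; exact (hc x (f x) (Or.inr rfl)).symm
    · rintro hc x y (rfl | rfl)
      · rfl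
      · exact (hc x).symm
  have e1 : ∀ A : Fin l → Fin n,
      (if ∀ x y, (matchingSetoid f hf).r x y → Fin.append A J x = Fin.append A J y
        then (1:ℝ) else 0)
      = (if ∀ x, Fin.append A J (f x) = Fin.append A J x then (1:ℝ) else 0) := by
    intro A
    by_cases hc : ∀ x, Fin.append A J (f x) = Fin.append A J x
    · rw [if_pos hc, if_pos ((hsc _).mpr hc)]
    · rw [if_neg hc, if_neg (fun hq => hc ((hsc _).mp hq))]
  have e2 : ∀ B : Fin k → Fin n,
      (if ∀ x y, (matchingSetoid f hf).r x y → Fin.append I B x = Fin.append I B y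
        then (1:ℝ) else 0)
      = (if ∀ x, Fin.append I B (f x) = Fin.append I B x then (1:ℝ) else 0) := by
    intro B
    by_cases hc : ∀ x, Fin.append I B (f x) = Fin.append I B x
    · rw [if_pos hc, if_pos ((hsc _).mpr hc)]
    · rw [if_neg hc, if_neg (fun hq => hc ((hsc _).mp hq))]
  simp only [e1, e2]
  rw [bridgeL f g I J, bridgeR f g I J,
    core f (fun x c => g (Fin.append I J x) c) hf hf' _ (Fin.append I J),
    core f (fun x c => g c (Fin.append I J x)) hf hf' _ (Fin.append I J)]
  refine Finset.prod_congr rfl (fun x hx => ?_)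
  have hxlt := (Finset.mem_filter.mp hx).2
  rw [Fin.lt_def] at hxlt
  have mS : ∀ z : Fin (l + k),
      z ∈ Finset.univ.filter (fun x : Fin (l + k) => (x : ℕ) < l) ↔ (z : ℕ) < l := by
    intro z; simp
  have mB : ∀ z : Fin (l + k),
      z ∈ Finset.univ.filter (fun x : Fin (l + k) => ¬ (x : ℕ) < l) ↔ ¬ (z : ℕ) < l := by
    intro z; simp
  unfold wgt
  by_cases h1 : (x : ℕ) < l <;> by_cases h2 : ((f x : Fin (l + k)) : ℕ) < l
  · rw [if_pos ((mS x).mpr h1), if_pos ((mS (f x)).mpr h2),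
      if_neg (fun hm => ((mB x).mp hm) h1), if_neg (fun hm => ((mB (f x)).mp hm) h2)]
    have hrw : (∑ c, g (Fin.append I J x) c * g (Fin.append I J (f x)) c)
        = (g * g.transpose) (Fin.append I J x) (Fin.append I J (f x)) := by
      rw [Matrix.mul_apply]
      refine Finset.sum_congr rfl (fun c _ => ?_)
      rw [Matrix.transpose_apply]
    show (∑ c, g (Fin.append I J x) c * g (Fin.append I J (f x)) c)
        = if Fin.append I J x = Fin.append I J (f x) then (1:ℝ) else 0
    rw [hrw, hg2]
    by_cases he : Fin.append I J x = Fin.append I J (f x)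
    · rw [if_pos he, he, Matrix.one_apply_eq]
    · rw [if_neg he, Matrix.one_apply_ne he]
  · rw [if_pos ((mS x).mpr h1), if_neg (fun hm => h2 ((mS (f x)).mp hm)),
      if_neg (fun hm => ((mB x).mp hm) h1), if_pos ((mB (f x)).mpr h2)]
  · omega
  · rw [if_neg (fun hm => h1 ((mS x).mp hm)), if_neg (fun hm => h2 ((mS (f x)).mp hm)),
      if_pos ((mB x).mpr h1), if_pos ((mB (f x)).mpr h2)]
    have hrw : (∑ c, g c (Fin.append I J x) * g c (Fin.append I J (f x)))
        = (g.transpose * g) (Fin.append I J x) (Fin.append I J (f x)) := by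
      rw [Matrix.mul_apply]
      refine Finset.sum_congr rfl (fun c _ => ?_)
      rw [Matrix.transpose_apply]
    show (if Fin.append I J x = Fin.append I J (f x) then (1:ℝ) else 0)
        = ∑ c, g c (Fin.append I J x) * g c (Fin.append I J (f x))
    rw [hrw, hg]
    by_cases he : Fin.append I J x = Fin.append I J (f x)
    · rw [if_pos he, he, Matrix.one_apply_eq]
    · rw [if_neg he, Matrix.one_apply_ne he]
end
end

section
/- For every perfect matching β of [l+k], the linear map F_β : (ℝⁿ)^{⊗k} → (ℝⁿ)^{⊗l} is Sp(n)-equivariant: g^{⊗l} ∘ F_β = F_β ∘ g^{⊗k} for every symplectic matrix g ∈ Sp(n). -/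
open Classical
noncomputable section

/-- The Gram matrix `ε` of the standard symplectic form `Ω` on `ℝ^{2m}`, in the basis
ordered `1, 1′, …, m, m′` (index `2a` is `a+1` and index `2a+1` is `(a+1)′`):
`ε_{a,b′} = −ε_{a′,b} = δ_{a,b}` and `ε_{a,b} = ε_{a′,b′} = 0`. -/
def eps (m : ℕ) : Matrix (Fin (2 * m)) (Fin (2 * m)) ℝ :=
  Matrix.of fun i j =>
    if i.val + 1 = j.val ∧ i.val % 2 = 0 then (1 : ℝ)
    else if j.val + 1 = i.val ∧ j.val % 2 = 0 then (-1 : ℝ) else 0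

/-- The matrix `F_β : (ℝⁿ)^{⊗k} → (ℝⁿ)^{⊗l}` (`n = 2m`) associated to a perfect matching
`β` of `[l+k]` encoded by an involution `f`: the `(I,J)` entry is the product, over the
blocks `{x, f x}` (with `x < f x`), of `γ_{x,f x}`, where `γ` is `ε` on same-row blocks
and the Kronecker delta on blocks meeting both rows. -/
def Fmat (m l k : ℕ) (f : Fin (l + k) → Fin (l + k)) :
    Matrix (Fin l → Fin (2 * m)) (Fin k → Fin (2 * m)) ℝ :=
  Matrix.of fun I J =>
    ∏ x ∈ Finset.univ.filter (fun x => x < f x),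
      (if ((x : Fin (l + k)).val < l ↔ (f x).val < l)
        then eps m (Fin.append I J x) (Fin.append I J (f x))
        else (if Fin.append I J x = Fin.append I J (f x) then (1 : ℝ) else 0))

lemma eps_mul_eps (m : ℕ) : eps m * eps m = -1 := by
  ext i j
  rw [Matrix.mul_apply, Matrix.neg_apply, Matrix.one_apply]
  by_cases hi : i.val % 2 = 0
  · have hlt : i.val + 1 < 2 * m := by omega
    rw [Finset.sum_eq_single (⟨i.val + 1, hlt⟩ : Fin (2 * m))]
    · simp only [eps, Matrix.of_apply, Fin.ext_iff]
      split_ifs <;> simp_all <;> omega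
    · intro b _ hb
      have hb' : b.val ≠ i.val + 1 := fun h => hb (Fin.ext h)
      simp only [eps, Matrix.of_apply]
      split_ifs <;> first | omega | ring
    · exact fun h => absurd (Finset.mem_univ _) h
  · have hlt : i.val - 1 < 2 * m := by omega
    rw [Finset.sum_eq_single (⟨i.val - 1, hlt⟩ : Fin (2 * m))]
    · simp only [eps, Matrix.of_apply, Fin.ext_iff]
      split_ifs <;> simp_all <;> omega
    · intro b _ hb
      have hb' : b.val ≠ i.val - 1 := fun h => hb (Fin.ext h)
      simp only [eps, Matrix.of_apply]
      split_ifs <;> first | omega | ring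
    · exact fun h => absurd (Finset.mem_univ _) h

lemma g_eps_gt (m : ℕ) (g : Matrix (Fin (2 * m)) (Fin (2 * m)) ℝ)
    (hg : g.transpose * eps m * g = eps m) : g * eps m * g.transpose = eps m := by
  have key : (-(eps m) * g.transpose * eps m) * g = 1 := by
    calc (-(eps m) * g.transpose * eps m) * g
        = -(eps m) * (g.transpose * eps m * g) := by simp only [Matrix.mul_assoc]
      _ = 1 := by rw [hg, neg_mul, eps_mul_eps, neg_neg]
  have key2 : g * (-(eps m) * g.transpose * eps m) = 1 := mul_eq_one_comm.mp key
  have h3 : g * (-(eps m) * g.transpose) * (eps m * eps m) = eps m := by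
    calc g * (-(eps m) * g.transpose) * (eps m * eps m)
        = (g * (-(eps m) * g.transpose * eps m)) * eps m := by simp only [Matrix.mul_assoc]
      _ = eps m := by rw [key2, one_mul]
  rw [eps_mul_eps] at h3
  simp only [mul_neg_one, neg_mul, mul_neg, neg_neg, mul_one, ← Matrix.mul_assoc] at h3
  exact h3

section Pairs

variable {N n : ℕ}

lemma flt_of_not_lt {f : Fin N → Fin N} (hf : ∀ x, f (f x) = x) (hf' : ∀ x, f x ≠ x)
    {y : Fin N} (hy : ¬ y < f y) : f y < f (f y) := by
  rw [hf]
  exact lt_of_le_of_ne (le_of_not_gt hy) (hf' y)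

lemma prod_pairs {M : Type*} [CommMonoid M] (f : Fin N → Fin N)
    (hf : ∀ x, f (f x) = x) (hf' : ∀ x, f x ≠ x) (h : Fin N → M) :
    ∏ x, h x = ∏ x ∈ Finset.univ.filter (fun x => x < f x), (h x * h (f x)) := by
  classical
  have hinj : Function.Injective f := Function.LeftInverse.injective hf
  set S := Finset.univ.filter (fun x => x < f x) with hS
  have h1 : ∏ x ∈ S, h (f x) = ∏ y ∈ S.image f, h y :=
    (Finset.prod_image (fun a _ b _ hab => hinj hab)).symm
  have hdisj : Disjoint S (S.image f) := by
    rw [Finset.disjoint_left]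
    intro a haS haI
    obtain ⟨b, hbS, hba⟩ := Finset.mem_image.mp haI
    simp only [hS, Finset.mem_filter, Finset.mem_univ, true_and] at haS hbS
    subst hba
    rw [hf] at haS
    exact absurd hbS (asymm haS)
  have hunion : S ∪ S.image f = Finset.univ := by
    ext x
    simp only [Finset.mem_union, Finset.mem_univ, iff_true, hS, Finset.mem_filter,
      Finset.mem_image, true_and]
    rcases lt_or_gt_of_ne (hf' x).symm with h | h
    · exact Or.inl h
    · exact Or.inr ⟨f x, flt_of_not_lt hf hf' (asymm h), hf x⟩
  rw [Finset.prod_mul_distrib, h1, ← Finset.prod_union hdisj, hunion]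

lemma sum_prod_pairs (f : Fin N → Fin N) (hf : ∀ x, f (f x) = x) (hf' : ∀ x, f x ≠ x)
    (Φ : Fin N → Fin n → Fin n → ℝ) :
    ∑ A : Fin N → Fin n, ∏ x ∈ Finset.univ.filter (fun x => x < f x), Φ x (A x) (A (f x))
      = ∏ x ∈ Finset.univ.filter (fun x => x < f x), ∑ a, ∑ b, Φ x a b := by
  classical
  have hmem : ∀ x : Fin N, x ∈ Finset.univ.filter (fun x => x < f x) ↔ x < f x := by simp
  simp_rw [Finset.prod_subtype _ hmem]
  simp_rw [← Fintype.sum_prod_type']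
  rw [Fintype.prod_sum]
  refine (Fintype.sum_bijective (fun (A : Fin N → Fin n) (x : {x : Fin N // x < f x}) =>
    ((A x.1, A (f x.1)) : Fin n × Fin n)) ?_ _ _ (fun A => rfl))
  rw [Function.bijective_iff_has_inverse]
  refine ⟨fun P y => if h : y < f y then (P ⟨y, h⟩).1 else (P ⟨f y, flt_of_not_lt hf hf' h⟩).2,
    fun A => ?_, fun P => ?_⟩
  · funext y
    by_cases h : y < f y
    · simp [h]
    · simp [h, hf]
  · funext x
    obtain ⟨x, hx⟩ := x
    have h2 : ¬ f x < f (f x) := by rw [hf]; exact asymm hx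
    refine Prod.ext ?_ ?_
    · simp [hx]
    · show (if h : f x < f (f x) then _ else _) = _
      rw [dif_neg h2]
      have : (⟨f (f x), flt_of_not_lt hf hf' h2⟩ : {x : Fin N // x < f x}) = ⟨x, hx⟩ :=
        Subtype.ext (hf x)
      rw [this]

end Pairs

lemma append_bij {n l k : ℕ} :
    Function.Bijective (fun p : (Fin l → Fin n) × (Fin k → Fin n) => Fin.append p.1 p.2) := by
  rw [Function.bijective_iff_has_inverse]
  refine ⟨fun A => (fun i => A (Fin.castAdd k i), fun i => A (Fin.natAdd l i)), fun p => ?_,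
    fun A => Fin.append_castAdd_natAdd⟩
  ext i <;> simp [Fin.append_left, Fin.append_right]

lemma sum_append_right {n l k : ℕ} (J : Fin k → Fin n) (F : (Fin (l + k) → Fin n) → ℝ)
    (hF : ∀ A : Fin (l + k) → Fin n, (∃ i, A (Fin.natAdd l i) ≠ J i) → F A = 0) :
    ∑ A : Fin (l + k) → Fin n, F A = ∑ K : Fin l → Fin n, F (Fin.append K J) := by
  classical
  rw [← Fintype.sum_bijective _ (append_bij (n := n) (l := l) (k := k))
    (fun p => F (Fin.append p.1 p.2)) F (fun p => rfl)]
  rw [Fintype.sum_prod_type]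
  refine Finset.sum_congr rfl fun K _ => ?_
  rw [Finset.sum_eq_single J]
  · intro K2 _ hK2
    refine hF _ ?_
    obtain ⟨i, hi⟩ := Function.ne_iff.mp hK2
    exact ⟨i, by simpa [Fin.append_right] using hi⟩
  · exact fun h => absurd (Finset.mem_univ _) h

lemma sum_append_left {n l k : ℕ} (I : Fin l → Fin n) (F : (Fin (l + k) → Fin n) → ℝ)
    (hF : ∀ A : Fin (l + k) → Fin n, (∃ i, A (Fin.castAdd k i) ≠ I i) → F A = 0) :
    ∑ A : Fin (l + k) → Fin n, F A = ∑ K : Fin k → Fin n, F (Fin.append I K) := by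
  classical
  rw [← Fintype.sum_bijective _ (append_bij (n := n) (l := l) (k := k))
    (fun p => F (Fin.append p.1 p.2)) F (fun p => rfl)]
  rw [Fintype.sum_prod_type_right]
  refine Finset.sum_congr rfl fun K _ => ?_
  rw [Finset.sum_eq_single I]
  · intro K1 _ hK1
    refine hF _ ?_
    obtain ⟨i, hi⟩ := Function.ne_iff.mp hK1
    exact ⟨i, by simpa [Fin.append_left] using hi⟩
  · exact fun h => absurd (Finset.mem_univ _) h

/-- for every perfect matching `β` of `[l+k]` (encoded by a fixed-point-free
involution `f`), the map `F_β` is `Sp(n)`-equivariant (`n = 2m`):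
`g^{⊗l} ∘ F_β = F_β ∘ g^{⊗k}` for every symplectic matrix `g`. -/
theorem Fmat_symplectic_equivariant (m k l : ℕ) (hm : 0 < m)
    (f : Fin (l + k) → Fin (l + k)) (hf : ∀ x, f (f x) = x) (hf' : ∀ x, f x ≠ x)
    (g : Matrix (Fin (2 * m)) (Fin (2 * m)) ℝ) (hg : g.transpose * eps m * g = eps m) :
    tensorPow (2 * m) l g * Fmat m l k f = Fmat m l k f * tensorPow (2 * m) k g := by
  classical
  have hg2 : g * eps m * g.transpose = eps m := g_eps_gt m g hg
  ext I J
  rw [Matrix.mul_apply, Matrix.mul_apply]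
  set ΦL : Fin (l + k) → Fin (2 * m) → Fin (2 * m) → ℝ := fun x a b =>
    (if (x : Fin (l + k)).val < l then g (Fin.append I J x) a
        else if Fin.append I J x = a then 1 else 0) *
      ((if (f x).val < l then g (Fin.append I J (f x)) b
          else if Fin.append I J (f x) = b then 1 else 0) *
        (if ((x : Fin (l + k)).val < l ↔ (f x).val < l) then eps m a b
          else if a = b then 1 else 0)) with hΦL
  set ΦR : Fin (l + k) → Fin (2 * m) → Fin (2 * m) → ℝ := fun x a b =>
    (if (x : Fin (l + k)).val < l then (if Fin.append I J x = a then 1 else 0)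
        else g a (Fin.append I J x)) *
      ((if (f x).val < l then (if Fin.append I J (f x) = b then 1 else 0)
          else g b (Fin.append I J (f x))) *
        (if ((x : Fin (l + k)).val < l ↔ (f x).val < l) then eps m a b
          else if a = b then 1 else 0)) with hΦR
  have stepL : ∀ K : Fin l → Fin (2 * m),
      tensorPow (2 * m) l g I K * Fmat m l k f K J
        = ∏ x ∈ Finset.univ.filter (fun x => x < f x),
            ΦL x (Fin.append K J x) (Fin.append K J (f x)) := by
    intro K
    simp only [tensorPow, Fmat, Matrix.of_apply]
    have h1 : (∏ i : Fin l, g (I i) (K i))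
        = ∏ x : Fin (l + k), (if (x : Fin (l + k)).val < l
            then g (Fin.append I J x) (Fin.append K J x)
            else if Fin.append I J x = Fin.append K J x then (1 : ℝ) else 0) := by
      rw [Fin.prod_univ_add]
      simp [Fin.append_left, Fin.append_right, Fin.is_lt]
    rw [h1, prod_pairs f hf hf', ← Finset.prod_mul_distrib]
    exact Finset.prod_congr rfl fun x hx => by simp only [hΦL]; ring
  have vanishL : ∀ A : Fin (l + k) → Fin (2 * m), (∃ i, A (Fin.natAdd l i) ≠ J i) →
      (∏ x ∈ Finset.univ.filter (fun x => x < f x), ΦL x (A x) (A (f x))) = 0 := by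
    rintro A ⟨i, hi⟩
    have hy : ¬ ((Fin.natAdd l i : Fin (l + k)).val < l) := by simp
    by_cases hcase : (Fin.natAdd l i : Fin (l + k)) < f (Fin.natAdd l i)
    · refine Finset.prod_eq_zero (Finset.mem_filter.mpr ⟨Finset.mem_univ _, hcase⟩) ?_
      simp only [hΦL]
      rw [if_neg hy, Fin.append_right, if_neg (Ne.symm hi)]
      ring
    · refine Finset.prod_eq_zero (Finset.mem_filter.mpr
        ⟨Finset.mem_univ _, flt_of_not_lt hf hf' hcase⟩) ?_
      simp only [hΦL]
      rw [hf, if_neg hy, Fin.append_right, if_neg (Ne.symm hi)]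
      ring
  have stepR : ∀ K : Fin k → Fin (2 * m),
      Fmat m l k f I K * tensorPow (2 * m) k g K J
        = ∏ x ∈ Finset.univ.filter (fun x => x < f x),
            ΦR x (Fin.append I K x) (Fin.append I K (f x)) := by
    intro K
    simp only [tensorPow, Fmat, Matrix.of_apply]
    have h1 : (∏ i : Fin k, g (K i) (J i))
        = ∏ x : Fin (l + k), (if (x : Fin (l + k)).val < l
            then (if Fin.append I J x = Fin.append I K x then (1 : ℝ) else 0)
            else g (Fin.append I K x) (Fin.append I J x)) := by
      rw [Fin.prod_univ_add]
      simp [Fin.append_left, Fin.append_right, Fin.is_lt]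
    rw [h1, prod_pairs f hf hf', ← Finset.prod_mul_distrib]
    exact Finset.prod_congr rfl fun x hx => by simp only [hΦR]; ring
  have vanishR : ∀ A : Fin (l + k) → Fin (2 * m), (∃ i, A (Fin.castAdd k i) ≠ I i) →
      (∏ x ∈ Finset.univ.filter (fun x => x < f x), ΦR x (A x) (A (f x))) = 0 := by
    rintro A ⟨i, hi⟩
    have hy : ((Fin.castAdd k i : Fin (l + k)).val < l) := by simp [Fin.is_lt]
    by_cases hcase : (Fin.castAdd k i : Fin (l + k)) < f (Fin.castAdd k i)
    · refine Finset.prod_eq_zero (Finset.mem_filter.mpr ⟨Finset.mem_univ _, hcase⟩) ?_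
      simp only [hΦR]
      rw [if_pos hy, Fin.append_left, if_neg (Ne.symm hi)]
      ring
    · refine Finset.prod_eq_zero (Finset.mem_filter.mpr
        ⟨Finset.mem_univ _, flt_of_not_lt hf hf' hcase⟩) ?_
      simp only [hΦR]
      rw [hf, if_pos hy, Fin.append_left, if_neg (Ne.symm hi)]
      ring
  have blockeq : ∀ x ∈ Finset.univ.filter (fun x => x < f x),
      (∑ a, ∑ b, ΦL x a b) = ∑ a, ∑ b, ΦR x a b := by
    intro x _
    simp only [hΦL, hΦR]
    by_cases h1 : (x : Fin (l + k)).val < l <;> by_cases h2 : (f x).val < l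
    · have hc : ((x : Fin (l + k)).val < l ↔ (f x).val < l) := iff_of_true h1 h2
      simp only [if_pos h1, if_pos h2, if_pos hc]
      have hL' : (∑ a, ∑ b, g (Fin.append I J x) a * (g (Fin.append I J (f x)) b * eps m a b))
          = (g * eps m * g.transpose) (Fin.append I J x) (Fin.append I J (f x)) := by
        rw [Matrix.mul_apply]
        simp_rw [Matrix.mul_apply, Matrix.transpose_apply, Finset.sum_mul]
        rw [Finset.sum_comm]
        exact Finset.sum_congr rfl fun a _ => Finset.sum_congr rfl fun b _ => by ring
      rw [hL', hg2]
      simp [mul_ite, ite_mul, one_mul, zero_mul, mul_zero, mul_one, Finset.sum_ite_eq,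
        Finset.sum_ite_eq']
    · have hc : ¬ ((x : Fin (l + k)).val < l ↔ (f x).val < l) := by simp [h1, h2]
      simp only [if_pos h1, if_neg h2, if_neg hc]
      simp [mul_ite, ite_mul, one_mul, zero_mul, mul_zero, mul_one, Finset.sum_ite_eq,
        Finset.sum_ite_eq']
    · have hc : ¬ ((x : Fin (l + k)).val < l ↔ (f x).val < l) := by simp [h1, h2]
      simp only [if_neg h1, if_pos h2, if_neg hc]
      simp [mul_ite, ite_mul, one_mul, zero_mul, mul_zero, mul_one, Finset.sum_ite_eq,
        Finset.sum_ite_eq']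
    · have hc : ((x : Fin (l + k)).val < l ↔ (f x).val < l) := iff_of_false h1 h2
      simp only [if_neg h1, if_neg h2, if_pos hc]
      have hR' : (∑ a, ∑ b, g a (Fin.append I J x) * (g b (Fin.append I J (f x)) * eps m a b))
          = (g.transpose * eps m * g) (Fin.append I J x) (Fin.append I J (f x)) := by
        rw [Matrix.mul_apply]
        simp_rw [Matrix.mul_apply, Matrix.transpose_apply, Finset.sum_mul]
        rw [Finset.sum_comm]
        exact Finset.sum_congr rfl fun a _ => Finset.sum_congr rfl fun b _ => by ring
      rw [hR', hg]
      simp [mul_ite, ite_mul, one_mul, zero_mul, mul_zero, mul_one, Finset.sum_ite_eq,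
        Finset.sum_ite_eq']
  calc ∑ K, tensorPow (2 * m) l g I K * Fmat m l k f K J
      = ∑ K : Fin l → Fin (2 * m), ∏ x ∈ Finset.univ.filter (fun x => x < f x),
          ΦL x (Fin.append K J x) (Fin.append K J (f x)) :=
        Finset.sum_congr rfl fun K _ => stepL K
    _ = ∑ A : Fin (l + k) → Fin (2 * m), ∏ x ∈ Finset.univ.filter (fun x => x < f x),
          ΦL x (A x) (A (f x)) := (sum_append_right J _ vanishL).symm
    _ = ∏ x ∈ Finset.univ.filter (fun x => x < f x), ∑ a, ∑ b, ΦL x a b :=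
        sum_prod_pairs f hf hf' ΦL
    _ = ∏ x ∈ Finset.univ.filter (fun x => x < f x), ∑ a, ∑ b, ΦR x a b :=
        Finset.prod_congr rfl blockeq
    _ = ∑ A : Fin (l + k) → Fin (2 * m), ∏ x ∈ Finset.univ.filter (fun x => x < f x),
          ΦR x (A x) (A (f x)) := (sum_prod_pairs f hf hf' ΦR).symm
    _ = ∑ K : Fin k → Fin (2 * m), ∏ x ∈ Finset.univ.filter (fun x => x < f x),
          ΦR x (Fin.append I K x) (Fin.append I K (f x)) := sum_append_left I _ vanishR
    _ = ∑ K, Fmat m l k f I K * tensorPow (2 * m) k g K J :=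
        Finset.sum_congr rfl fun K _ => (stepR K).symm
end
end

section
/- For every (l+k)\n-diagram α, the linear map H_α : (ℝⁿ)^{⊗k} → (ℝⁿ)^{⊗l} is SO(n)-equivariant: g^{⊗l} ∘ H_α = H_α ∘ g^{⊗k} for every special orthogonal matrix g ∈ SO(n). -/
open Classical
set_option maxHeartbeats 1000000
noncomputable section

/-- The matrix `H_α : (ℝⁿ)^{⊗k} → (ℝⁿ)^{⊗l}` associated to an `(l+k)\n`-diagram `α`,
encoded by an involution `f` of `Fin (l+k)` whose fixed points (exactly `n` of them,
by `hcard`) are the free vertices and whose 2-cycles are the size-two blocks.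
The `(I,J)` entry is `det(e_{i_{t₁}} | … | e_{i_{t_s}} | e_{i_{l+b₁}} | … | e_{i_{l+b_{n−s}}})`
(columns indexed by the free vertices: those in the top row in increasing order followed
by those in the bottom row in increasing order, which is exactly the increasing order on
`Fin (l+k)`) times the product of Kronecker deltas over the size-two blocks. -/
def Hmat (n l k : ℕ) (f : Fin (l + k) → Fin (l + k))
    (hcard : (Finset.univ.filter (fun x => f x = x)).card = n) :
    Matrix (Fin l → Fin n) (Fin k → Fin n) ℝ :=
  Matrix.of fun I J =>
    (Matrix.det (Matrix.of fun r c : Fin n =>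
      if r = Fin.append I J
        (((Finset.univ.filter (fun x : Fin (l + k) => f x = x)).orderIsoOfFin hcard c : Fin (l + k)))
      then (1 : ℝ) else 0))
    * ∏ x ∈ Finset.univ.filter (fun x : Fin (l + k) => x < f x),
        (if Fin.append I J x = Fin.append I J (f x) then (1 : ℝ) else 0)

namespace SOEquiv

/-- The "diagram tensor" as a function of a full index tuple. -/
def phi (n N : ℕ) (f : Fin N → Fin N)
    (hcard : (Finset.univ.filter (fun x => f x = x)).card = n)
    (A : Fin N → Fin n) : ℝ :=
  (Matrix.det (Matrix.of fun r c : Fin n =>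
      if r = A (((Finset.univ.filter (fun x : Fin N => f x = x)).orderIsoOfFin hcard c : Fin N))
      then (1 : ℝ) else 0))
  * ∏ x ∈ Finset.univ.filter (fun x : Fin N => x < f x),
      (if A x = A (f x) then (1 : ℝ) else 0)

lemma Hmat_eq (n l k : ℕ) (f : Fin (l + k) → Fin (l + k))
    (hcard : (Finset.univ.filter (fun x => f x = x)).card = n)
    (I : Fin l → Fin n) (J : Fin k → Fin n) :
    Hmat n l k f hcard I J = phi n (l + k) f hcard (Fin.append I J) := rfl

/-- contracting the determinant tensor with `g` along all columns. -/
lemma det_contract (n : ℕ) (g : Matrix (Fin n) (Fin n) ℝ) (hdet : g.det = 1)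
    (a : Fin n → Fin n) :
    ∑ u : Fin n → Fin n, (∏ c, g (a c) (u c)) *
      Matrix.det (Matrix.of fun r c : Fin n => if r = u c then (1:ℝ) else 0)
    = Matrix.det (Matrix.of fun r c : Fin n => if r = a c then (1:ℝ) else 0) := by
  classical
  set F := (Matrix.detRowAlternating : (Fin n → ℝ) [⋀^Fin n]→ₗ[ℝ] ℝ).toMultilinearMap
  have hdetT : ∀ u : Fin n → Fin n,
      Matrix.det (Matrix.of fun r c : Fin n => if r = u c then (1:ℝ) else 0)
      = F (fun c => (Pi.single (u c) (1:ℝ) : Fin n → ℝ)) := by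
    intro u
    rw [← Matrix.det_transpose]
    congr 1
    ext c r
    simp [Matrix.transpose, Pi.single_apply]
  calc ∑ u : Fin n → Fin n, (∏ c, g (a c) (u c)) *
      Matrix.det (Matrix.of fun r c : Fin n => if r = u c then (1:ℝ) else 0)
      = ∑ u : Fin n → Fin n, F (fun c => g (a c) (u c) • (Pi.single (u c) (1:ℝ) : Fin n → ℝ)) := by
        refine Finset.sum_congr rfl fun u _ => ?_
        rw [hdetT u, F.map_smul_univ, smul_eq_mul]
    _ = F (fun c => ∑ j : Fin n, g (a c) j • (Pi.single j (1:ℝ) : Fin n → ℝ)) := by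
        rw [F.map_sum (g := fun c j => g (a c) j • (Pi.single j (1:ℝ) : Fin n → ℝ))]
    _ = F (fun c => g (a c)) := by
        congr 1; funext c; funext r
        simp [Finset.sum_apply, Pi.single_apply, mul_ite]
    _ = Matrix.det (Matrix.of fun r c : Fin n => if r = a c then (1:ℝ) else 0) := by
        have h1 : (Matrix.of fun c r : Fin n => g (a c) r)
            = (Matrix.of fun c s : Fin n => if s = a c then (1:ℝ) else 0) * g := by
          ext c r
          simp [Matrix.mul_apply]
        have h2 : F (fun c => g (a c)) = Matrix.det (Matrix.of fun c r : Fin n => g (a c) r) := rfl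
        rw [h2, h1, Matrix.det_mul, hdet, mul_one, ← Matrix.det_transpose]
        congr 1

/-- contracting a collection of delta tensors with `g ⊗ g`. -/
lemma pair_contract (n : ℕ) (g : Matrix (Fin n) (Fin n) ℝ) (hg1 : g * g.transpose = 1)
    {ι : Type*} [Fintype ι] [DecidableEq ι] (a b : ι → Fin n) :
    ∑ vw : (ι → Fin n) × (ι → Fin n),
      ∏ x, (g (a x) (vw.1 x) * g (b x) (vw.2 x) * (if vw.1 x = vw.2 x then (1:ℝ) else 0))
    = ∏ x, (if a x = b x then (1:ℝ) else 0) := by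
  classical
  rw [← Equiv.sum_comp (Equiv.arrowProdEquivProdArrow ι (fun _ => Fin n) (fun _ => Fin n))
    (fun vw : (ι → Fin n) × (ι → Fin n) =>
      ∏ x, (g (a x) (vw.1 x) * g (b x) (vw.2 x) * (if vw.1 x = vw.2 x then (1:ℝ) else 0)))]
  have h0 : ∀ p : ι → Fin n × Fin n,
      (fun vw : (ι → Fin n) × (ι → Fin n) =>
        ∏ x, (g (a x) (vw.1 x) * g (b x) (vw.2 x) * (if vw.1 x = vw.2 x then (1:ℝ) else 0)))
        ((Equiv.arrowProdEquivProdArrow ι (fun _ => Fin n) (fun _ => Fin n)) p)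
      = ∏ x, (g (a x) (p x).1 * g (b x) (p x).2 *
          (if (p x).1 = (p x).2 then (1:ℝ) else 0)) := fun p => rfl
  simp only [h0]
  rw [← Fintype.piFinset_univ]
  rw [Finset.sum_prod_piFinset Finset.univ
    (fun (i : ι) (j : Fin n × Fin n) => g (a i) j.1 * g (b i) j.2 *
      (if j.1 = j.2 then (1:ℝ) else 0))]
  refine Finset.prod_congr rfl fun x _ => ?_
  rw [Fintype.sum_prod_type]
  have h1 : ∀ b1 : Fin n, ∑ b2 : Fin n,
      g (a x) b1 * g (b x) b2 * (if b1 = b2 then (1:ℝ) else 0)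
      = g (a x) b1 * g (b x) b1 := by
    intro b1
    rw [Finset.sum_eq_single b1]
    · simp
    · intro c _ hc; simp [Ne.symm hc]
    · simp
  simp only [h1]
  calc ∑ b1, g (a x) b1 * g (b x) b1 = (g * g.transpose) (a x) (b x) := by
        rw [Matrix.mul_apply]; simp [Matrix.transpose_apply]
    _ = (1 : Matrix (Fin n) (Fin n) ℝ) (a x) (b x) := by rw [hg1]
    _ = (if a x = b x then (1:ℝ) else 0) := by rw [Matrix.one_apply]

/-- The key invariance of the diagram tensor under the diagonal `SO(n)` action. -/
lemma invariance (n N : ℕ) (f : Fin N → Fin N) (hf : ∀ x, f (f x) = x)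
    (hcard : (Finset.univ.filter (fun x => f x = x)).card = n)
    (g : Matrix (Fin n) (Fin n) ℝ) (hg : g.transpose * g = 1) (hdet : g.det = 1)
    (A : Fin N → Fin n) :
    ∑ B : Fin N → Fin n, (∏ x, g (A x) (B x)) * phi n N f hcard B
      = phi n N f hcard A := by
  classical
  have hg1 : g * g.transpose = 1 := mul_eq_one_comm.mp hg
  set S : Finset (Fin N) := Finset.univ.filter (fun x => f x = x) with hS
  set e := S.orderIsoOfFin hcard with he
  set Q : Finset (Fin N) := Finset.univ.filter (fun x => x < f x) with hQ
  set Q' : Finset (Fin N) := Finset.univ.filter (fun x => f x < x) with hQ'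
  have hmemS : ∀ x, x ∈ S ↔ f x = x := by intro x; rw [hS]; simp
  have hmemQ : ∀ x, x ∈ Q ↔ x < f x := by intro x; rw [hQ]; simp
  have hmemQ' : ∀ x, x ∈ Q' ↔ f x < x := by intro x; rw [hQ']; simp
  have hfS : ∀ c : Fin n, f (e c) = e c := fun c => (hmemS _).1 (e c).2
  -- the reindexing equivalence
  set E : (Fin N → Fin n) ≃
      ((Fin n → Fin n) × ({x : Fin N // x < f x} → Fin n) × ({x : Fin N // x < f x} → Fin n)) :=
    { toFun := fun B => (fun c => B (e c), fun x => B x.1, fun x => B (f x.1)),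
      invFun := fun t x =>
        if h : x < f x then t.2.1 ⟨x, h⟩
        else if h' : f x < x then t.2.2 ⟨f x, by rw [hf]; exact h'⟩
        else t.1 (e.symm ⟨x, (hmemS x).2 (le_antisymm (not_lt.1 h) (not_lt.1 h'))⟩),
      left_inv := fun B => by
        funext x
        by_cases h : x < f x
        · simp [h]
        · by_cases h' : f x < x
          · simp [h, h', hf]
          · simp only [dif_neg h, dif_neg h']
            congr 1
            exact congrArg Subtype.val (e.apply_symm_apply _)
      right_inv := fun t => by
        refine Prod.ext ?_ (Prod.ext ?_ ?_)
        · funext c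
          have h1 : ¬ (e c : Fin N) < f (e c) := by rw [hfS]; exact lt_irrefl _
          have h2 : ¬ f (e c : Fin N) < (e c : Fin N) := by rw [hfS]; exact lt_irrefl _
          simp only [dif_neg h1, dif_neg h2]
          congr 1
          have h3 : (⟨(e c : Fin N), _⟩ : {x // x ∈ S}) = e c := Subtype.ext rfl
          rw [h3, OrderIso.symm_apply_apply]
        · funext x
          simp only [dif_pos x.2]
        · funext x
          have h1 : ¬ f x.1 < f (f x.1) := by rw [hf]; exact asymm x.2
          have h2 : f (f x.1) < f x.1 := by rw [hf]; exact x.2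
          simp only [dif_neg h1, dif_pos h2]
          exact congrArg _ (Subtype.ext (hf x.1)) }
  -- rewrite the summand
  have key : ∀ B : Fin N → Fin n,
      (∏ x, g (A x) (B x)) * phi n N f hcard B
      = ((∏ c, g (A (e c)) (B (e c))) *
          Matrix.det (Matrix.of fun r c : Fin n => if r = B (e c) then (1:ℝ) else 0))
        * ∏ x : {x : Fin N // x < f x},
            (g (A x.1) (B x.1) * g (A (f x.1)) (B (f x.1)) *
              (if B x.1 = B (f x.1) then (1:ℝ) else 0)) := by
    intro B
    have hsplit : (∏ x, g (A x) (B x))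
        = (∏ x ∈ S, g (A x) (B x)) * ((∏ x ∈ Q, g (A x) (B x)) * ∏ x ∈ Q', g (A x) (B x)) := by
      rw [← Finset.prod_filter_mul_prod_filter_not Finset.univ (fun x => f x = x)
        (fun x => g (A x) (B x))]
      congr 1
      rw [← Finset.prod_filter_mul_prod_filter_not
        (Finset.univ.filter (fun x => ¬ f x = x)) (fun x => x < f x) (fun x => g (A x) (B x))]
      congr 1
      · apply Finset.prod_congr _ (fun _ _ => rfl)
        ext x
        simp only [Finset.mem_filter, Finset.mem_univ, true_and, hmemQ]
        constructor
        · exact fun h => h.2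
        · intro h; exact ⟨fun he' => ne_of_lt h he'.symm, h⟩
      · apply Finset.prod_congr _ (fun _ _ => rfl)
        ext x
        simp only [Finset.mem_filter, Finset.mem_univ, true_and, hmemQ']
        constructor
        · rintro ⟨h1, h2⟩
          exact lt_of_le_of_ne (not_lt.1 h2) h1
        · intro h
          exact ⟨fun he' => ne_of_lt h he', asymm h⟩
    have hprodS : (∏ x ∈ S, g (A x) (B x)) = ∏ c : Fin n, g (A (e c)) (B (e c)) := by
      rw [← Finset.prod_coe_sort S (fun x => g (A x) (B x))]
      exact (Fintype.prod_equiv e.toEquiv _ _ (fun c => rfl)).symm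
    have hprodQ : (∏ x ∈ Q, g (A x) (B x)) = ∏ x : {x : Fin N // x < f x}, g (A x.1) (B x.1) :=
      Finset.prod_subtype Q hmemQ _
    have hprodQ' : (∏ x ∈ Q', g (A x) (B x))
        = ∏ x : {x : Fin N // x < f x}, g (A (f x.1)) (B (f x.1)) := by
      have h4 : (∏ x ∈ Q', g (A x) (B x)) = ∏ x ∈ Q, g (A (f x)) (B (f x)) := by
        refine (Finset.prod_nbij' f f ?_ ?_ ?_ ?_ ?_).symm
        · intro x hx; rw [hmemQ']; rw [hmemQ] at hx; rw [hf]; exact hx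
        · intro x hx; rw [hmemQ]; rw [hmemQ'] at hx; rw [hf]; exact hx
        · intro x _; rw [hf]
        · intro x _; rw [hf]
        · intro x _; rfl
      rw [h4]
      exact Finset.prod_subtype Q hmemQ _
    have hdelta : (∏ x ∈ Q, (if B x = B (f x) then (1:ℝ) else 0))
        = ∏ x : {x : Fin N // x < f x}, (if B x.1 = B (f x.1) then (1:ℝ) else 0) :=
      Finset.prod_subtype Q hmemQ _
    calc (∏ x, g (A x) (B x)) * phi n N f hcard B
        = (∏ x, g (A x) (B x)) *
            ((Matrix.det (Matrix.of fun r c : Fin n => if r = B (e c) then (1:ℝ) else 0))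
              * ∏ x ∈ Q, (if B x = B (f x) then (1:ℝ) else 0)) := rfl
      _ = _ := by
          rw [hsplit, hprodS, hprodQ, hprodQ', hdelta, Finset.prod_mul_distrib,
            Finset.prod_mul_distrib]
          ring
  calc ∑ B : Fin N → Fin n, (∏ x, g (A x) (B x)) * phi n N f hcard B
      = ∑ B : Fin N → Fin n,
          (((∏ c, g (A (e c)) (B (e c))) *
            Matrix.det (Matrix.of fun r c : Fin n => if r = B (e c) then (1:ℝ) else 0))
          * ∏ x : {x : Fin N // x < f x},
              (g (A x.1) (B x.1) * g (A (f x.1)) (B (f x.1)) *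
                (if B x.1 = B (f x.1) then (1:ℝ) else 0))) :=
        Finset.sum_congr rfl fun B _ => key B
    _ = ∑ t : ((Fin n → Fin n) × ({x : Fin N // x < f x} → Fin n) × ({x : Fin N // x < f x} → Fin n)),
          (((∏ c, g (A (e c)) (t.1 c)) *
            Matrix.det (Matrix.of fun r c : Fin n => if r = t.1 c then (1:ℝ) else 0))
          * ∏ x : {x : Fin N // x < f x},
              (g (A x.1) (t.2.1 x) * g (A (f x.1)) (t.2.2 x) *
                (if t.2.1 x = t.2.2 x then (1:ℝ) else 0))) :=
        Fintype.sum_equiv E _ _ (fun B => rfl)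
    _ = ∑ u : Fin n → Fin n,
          ∑ vw : ({x : Fin N // x < f x} → Fin n) × ({x : Fin N // x < f x} → Fin n),
          (((∏ c, g (A (e c)) (u c)) *
            Matrix.det (Matrix.of fun r c : Fin n => if r = u c then (1:ℝ) else 0))
          * ∏ x : {x : Fin N // x < f x},
              (g (A x.1) (vw.1 x) * g (A (f x.1)) (vw.2 x) *
                (if vw.1 x = vw.2 x then (1:ℝ) else 0))) := Fintype.sum_prod_type _
    _ = (∑ u : Fin n → Fin n, (∏ c, g (A (e c)) (u c)) *
            Matrix.det (Matrix.of fun r c : Fin n => if r = u c then (1:ℝ) else 0))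
        * (∑ vw : ({x : Fin N // x < f x} → Fin n) × ({x : Fin N // x < f x} → Fin n),
            ∏ x : {x : Fin N // x < f x},
              (g (A x.1) (vw.1 x) * g (A (f x.1)) (vw.2 x) *
                (if vw.1 x = vw.2 x then (1:ℝ) else 0))) := by
          rw [Finset.sum_mul_sum]
    _ = Matrix.det (Matrix.of fun r c : Fin n => if r = A (e c) then (1:ℝ) else 0)
        * ∏ x : {x : Fin N // x < f x}, (if A x.1 = A (f x.1) then (1:ℝ) else 0) := by
          congr 1
          · exact det_contract n g hdet (fun c => A (e c))
          · exact pair_contract n g hg1 (fun x : {x : Fin N // x < f x} => A x.1)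
              (fun x : {x : Fin N // x < f x} => A (f x.1))
    _ = phi n N f hcard A := by
          have h6 : (∏ x ∈ Q, (if A x = A (f x) then (1:ℝ) else 0))
              = ∏ x : {x : Fin N // x < f x}, (if A x.1 = A (f x.1) then (1:ℝ) else 0) :=
            Finset.prod_subtype Q hmemQ (fun x => if A x = A (f x) then (1:ℝ) else 0)
          exact (congrArg (fun z =>
            Matrix.det (Matrix.of fun r c : Fin n => if r = A (e c) then (1:ℝ) else 0) * z)
            h6).symm

lemma tensorPow_transpose (n k : ℕ) (g : Matrix (Fin n) (Fin n) ℝ) :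
    (tensorPow n k g).transpose = tensorPow n k g.transpose := by
  ext I J
  simp [tensorPow, Matrix.transpose_apply]

lemma tensorPow_mul (n k : ℕ) (p q : Matrix (Fin n) (Fin n) ℝ) :
    tensorPow n k (p * q) = tensorPow n k p * tensorPow n k q := by
  ext I J
  rw [Matrix.mul_apply]
  show ∏ i, (p * q) (I i) (J i)
      = ∑ K : Fin k → Fin n, tensorPow n k p I K * tensorPow n k q K J
  simp_rw [Matrix.mul_apply]
  rw [Finset.prod_univ_sum, Fintype.piFinset_univ]
  refine Finset.sum_congr rfl fun K _ => ?_
  show ∏ i, p (I i) (K i) * q (K i) (J i) = (∏ i, p (I i) (K i)) * ∏ i, q (K i) (J i)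
  rw [Finset.prod_mul_distrib]

lemma tensorPow_one (n k : ℕ) :
    tensorPow n k (1 : Matrix (Fin n) (Fin n) ℝ) = 1 := by
  ext I J
  show (∏ i, (1 : Matrix (Fin n) (Fin n) ℝ) (I i) (J i)) = (1 : Matrix _ _ ℝ) I J
  rw [Matrix.one_apply]
  by_cases h : I = J
  · subst h
    rw [if_pos rfl]
    apply Finset.prod_eq_one
    intro i _
    rw [Matrix.one_apply_eq]
  · rw [if_neg h]
    obtain ⟨i, hi⟩ := Function.ne_iff.1 h
    exact Finset.prod_eq_zero (Finset.mem_univ i) (Matrix.one_apply_ne hi)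

/-- append as an equivalence -/
def appendE (n l k : ℕ) : ((Fin l → Fin n) × (Fin k → Fin n)) ≃ (Fin (l + k) → Fin n) where
  toFun p := Fin.append p.1 p.2
  invFun B := (fun i => B (Fin.castAdd k i), fun j => B (Fin.natAdd l j))
  left_inv p := by
    refine Prod.ext ?_ ?_
    · funext i; exact Fin.append_left p.1 p.2 i
    · funext j; exact Fin.append_right p.1 p.2 j
  right_inv B := by
    funext x
    induction x using Fin.addCases with
    | left i => exact Fin.append_left _ _ i
    | right i => exact Fin.append_right _ _ i

end SOEquiv

/-- for every `(l+k)\n`-diagram `α`, the map `H_α` is `SO(n)`-equivariant: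
`g^{⊗l} ∘ H_α = H_α ∘ g^{⊗k}` for every special orthogonal matrix `g`. -/
theorem Hmat_special_orthogonal_equivariant (n k l : ℕ) (hn : 0 < n)
    (f : Fin (l + k) → Fin (l + k)) (hf : ∀ x, f (f x) = x)
    (hcard : (Finset.univ.filter (fun x => f x = x)).card = n)
    (g : Matrix (Fin n) (Fin n) ℝ) (hg : g.transpose * g = 1) (hdet : g.det = 1) :
    tensorPow n l g * Hmat n l k f hcard = Hmat n l k f hcard * tensorPow n k g := by
  classical
  have hTT : (tensorPow n k g).transpose * tensorPow n k g = 1 := by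
    rw [SOEquiv.tensorPow_transpose, ← SOEquiv.tensorPow_mul, hg, SOEquiv.tensorPow_one]
  have hM1 : tensorPow n l g * Hmat n l k f hcard * (tensorPow n k g).transpose
      = Hmat n l k f hcard := by
    ext I J
    have lhs1 : (tensorPow n l g * Hmat n l k f hcard * (tensorPow n k g).transpose) I J
        = ∑ M : Fin k → Fin n, ∑ K : Fin l → Fin n,
            (∏ i, g (I i) (K i)) * Hmat n l k f hcard K M * (∏ j, g (J j) (M j)) := by
      rw [Matrix.mul_apply]
      refine Finset.sum_congr rfl fun M _ => ?_
      rw [Matrix.mul_apply, Finset.sum_mul]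
      refine Finset.sum_congr rfl fun K _ => ?_
      rfl
    rw [lhs1, Finset.sum_comm]
    have rhs1 : Hmat n l k f hcard I J = SOEquiv.phi n (l + k) f hcard (Fin.append I J) := rfl
    rw [rhs1, ← SOEquiv.invariance n (l + k) f hf hcard g hg hdet (Fin.append I J)]
    rw [← Equiv.sum_comp (SOEquiv.appendE n l k) (fun B : Fin (l + k) → Fin n =>
      (∏ x, g (Fin.append I J x) (B x)) * SOEquiv.phi n (l + k) f hcard B), Fintype.sum_prod_type]
    refine Finset.sum_congr rfl fun K _ => Finset.sum_congr rfl fun M _ => ?_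
    show (∏ i, g (I i) (K i)) * Hmat n l k f hcard K M * (∏ j, g (J j) (M j))
        = (∏ x, g (Fin.append I J x) (Fin.append K M x)) * SOEquiv.phi n (l + k) f hcard (Fin.append K M)
    have hp : (∏ x, g (Fin.append I J x) (Fin.append K M x))
        = (∏ i, g (I i) (K i)) * (∏ j, g (J j) (M j)) := by
      rw [Fin.prod_univ_add]
      congr 1
      · exact Finset.prod_congr rfl fun i _ => by rw [Fin.append_left, Fin.append_left]
      · exact Finset.prod_congr rfl fun j _ => by rw [Fin.append_right, Fin.append_right]
    rw [hp, SOEquiv.Hmat_eq]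
    ring
  calc tensorPow n l g * Hmat n l k f hcard
      = tensorPow n l g * Hmat n l k f hcard *
          ((tensorPow n k g).transpose * tensorPow n k g) := by rw [hTT, Matrix.mul_one]
    _ = (tensorPow n l g * Hmat n l k f hcard * (tensorPow n k g).transpose)
          * tensorPow n k g :=
        (Matrix.mul_assoc (tensorPow n l g * Hmat n l k f hcard)
          (tensorPow n k g).transpose (tensorPow n k g)).symm
    _ = Hmat n l k f hcard * tensorPow n k g := by rw [hM1]
end
end

section
/- For permutations σ_l ∈ S_l, σ_k ∈ S_k and any set partition π of [l+k], one has D_{(σ_l,σ_k)·π} = Q_{σ_l} ∘ D_π ∘ Q_{σ_k}^{-1}, where (σ_l,σ_k)·π is the set partition of [l+k] whose blocks are the images of the blocks of π under the relabeling τ given by τ(x) = σ_l(x) for x ≤ l and τ(l+m) = l+σ_k(m) for m ∈ [k], and Q_σ : (ℝⁿ)^{⊗m} → (ℝⁿ)^{⊗m} is the linear map permuting tensor factors by Q_σ(e_{j₁}⊗…⊗e_{j_m}) = e_{j_{σ^{-1}(1)}}⊗…⊗e_{j_{σ^{-1}(m)}}. -/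
open Classical
noncomputable section

/-- The relabeling `τ` of `[l+k]` induced by `σ_l ∈ S_l` on the top row and
`σ_k ∈ S_k` on the bottom row: `τ(x) = σ_l(x)` for `x ≤ l`, `τ(l+m) = l+σ_k(m)`. -/
def permSum (l k : ℕ) (σl : Equiv.Perm (Fin l)) (σk : Equiv.Perm (Fin k))
    (x : Fin (l + k)) : Fin (l + k) :=
  Fin.addCases (motive := fun _ => Fin (l + k))
    (fun a => Fin.castAdd k (σl a)) (fun b => Fin.natAdd l (σk b)) x

/-- The set partition `(σ_l, σ_k) · π`, whose blocks are the images of the blocks of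
`π` under the relabeling `τ` (its relation pulls back along `τ⁻¹`). -/
def relabelSetoid (l k : ℕ) (σl : Equiv.Perm (Fin l)) (σk : Equiv.Perm (Fin k))
    (π : Setoid (Fin (l + k))) : Setoid (Fin (l + k)) :=
  Setoid.comap (permSum l k σl⁻¹ σk⁻¹) π

/-- The matrix `Q_σ : (ℝⁿ)^{⊗m} → (ℝⁿ)^{⊗m}` permuting the tensor factors:
`Q_σ(e_{j₁}⊗…⊗e_{j_m}) = e_{j_{σ⁻¹(1)}}⊗…⊗e_{j_{σ⁻¹(m)}}`, i.e. `Q_σ e_J = e_{J ∘ σ⁻¹}`. -/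
def Qmat (n m : ℕ) (σ : Equiv.Perm (Fin m)) :
    Matrix (Fin m → Fin n) (Fin m → Fin n) ℝ :=
  Matrix.of fun I J => if I = J ∘ ⇑σ⁻¹ then (1 : ℝ) else 0


lemma permSum_castAdd (l k : ℕ) (σl : Equiv.Perm (Fin l)) (σk : Equiv.Perm (Fin k))
    (a : Fin l) : permSum l k σl σk (Fin.castAdd k a) = Fin.castAdd k (σl a) := by
  simp [permSum]

lemma permSum_natAdd (l k : ℕ) (σl : Equiv.Perm (Fin l)) (σk : Equiv.Perm (Fin k))
    (b : Fin k) : permSum l k σl σk (Fin.natAdd l b) = Fin.natAdd l (σk b) := by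
  simp [permSum]

lemma permSum_inv (l k : ℕ) (σl : Equiv.Perm (Fin l)) (σk : Equiv.Perm (Fin k))
    (x : Fin (l + k)) :
    permSum l k σl⁻¹ σk⁻¹ (permSum l k σl σk x) = x := by
  refine Fin.addCases (fun a => ?_) (fun b => ?_) x
  · rw [permSum_castAdd, permSum_castAdd]; simp
  · rw [permSum_natAdd, permSum_natAdd]; simp

lemma append_permSum {n l k : ℕ} (σl : Equiv.Perm (Fin l)) (σk : Equiv.Perm (Fin k))
    (I : Fin l → Fin n) (J : Fin k → Fin n) (x : Fin (l + k)) :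
    Fin.append I J (permSum l k σl σk x) = Fin.append (I ∘ σl) (J ∘ σk) x := by
  refine Fin.addCases (fun a => ?_) (fun b => ?_) x
  · rw [permSum_castAdd]; simp
  · rw [permSum_natAdd]; simp

/-- `D_{(σ_l,σ_k)·π} = Q_{σ_l} ∘ D_π ∘ Q_{σ_k}⁻¹`
(note `Q_{σ_k}⁻¹ = Q_{σ_k⁻¹}`). -/
theorem Dmat_relabel (n k l : ℕ) (hn : 0 < n)
    (σl : Equiv.Perm (Fin l)) (σk : Equiv.Perm (Fin k)) (π : Setoid (Fin (l + k))) :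
    Dmat n l k (relabelSetoid l k σl σk π) =
      Qmat n l σl * Dmat n l k π * Qmat n k σk⁻¹ := by
  ext I J
  have hR : (Qmat n l σl * Dmat n l k π * Qmat n k σk⁻¹) I J
      = Dmat n l k π (I ∘ σl) (J ∘ σk) := by
    rw [Matrix.mul_apply]
    rw [Finset.sum_eq_single (J ∘ ⇑σk)]
    · rw [Matrix.mul_apply, Finset.sum_eq_single (I ∘ ⇑σl)]
      · simp only [Qmat, Matrix.of_apply]
        rw [if_pos, if_pos]
        · ring
        · funext b; simp
        · funext a; simp
      · intro K _ hK
        have : Qmat n l σl I K = 0 := by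
          simp only [Qmat, Matrix.of_apply]
          split_ifs with h
          · exact absurd (by funext a; rw [h]; simp) hK
          · rfl
        rw [this, zero_mul]
      · intro h; exact absurd (Finset.mem_univ _) h
    · intro K _ hK
      have : Qmat n k σk⁻¹ K J = 0 := by
        simp only [Qmat, Matrix.of_apply]
        split_ifs with h
        · exact absurd (by rw [h]; simp) hK
        · rfl
      rw [this, mul_zero]
    · intro h; exact absurd (Finset.mem_univ _) h
  rw [hR]
  simp only [Dmat, Matrix.of_apply, relabelSetoid, Setoid.comap]
  congr 1
  apply propext
  constructor
  · intro h x y hxy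
    have := h (permSum l k σl σk x) (permSum l k σl σk y)
    change π (permSum l k σl⁻¹ σk⁻¹ (permSum l k σl σk x)) (permSum l k σl⁻¹ σk⁻¹ (permSum l k σl σk y)) → _ at this
    rw [permSum_inv, permSum_inv] at this
    rw [← append_permSum, ← append_permSum]
    exact this hxy
  · intro h x y hxy
    have := h (permSum l k σl⁻¹ σk⁻¹ x) (permSum l k σl⁻¹ σk⁻¹ y) hxy
    rw [append_permSum, append_permSum] at this
    have hI : (I ∘ ⇑σl) ∘ ⇑σl⁻¹ = I := by funext a; simp
    have hJ : (J ∘ ⇑σk) ∘ ⇑σk⁻¹ = J := by funext b; simp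
    rwa [hI, hJ] at this
end
end

section
/- For every set partition π of [l+k] there exist permutations σ_l ∈ S_l and σ_k ∈ S_k such that the relabeled partition π′ := (σ_l,σ_k)·π is algorithmically planar, meaning: (i) every block of π′ lying entirely in the top row {1,…,l} is a set of consecutive integers, and these blocks together occupy an initial segment of the top row; (ii) every block of π′ lying entirely in the bottom row {l+1,…,l+k} is a set of consecutive integers, these blocks together occupy a final segment of the bottom row, and their sizes are non-decreasing from left to right; (iii) for every block of π′ meeting both rows, its top-row part and its bottom-row part are each sets of consecutive integers, and for any two such blocks B, B′, all top-row elements of B precede all top-row elements of B′ if and only if all bottom-row elements of B precede all bottom-row elements of B′ (no two blocks cross). Consequently D_π = Q_{σ_l}^{-1} ∘ D_{π′} ∘ Q_{σ_k}. -/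
open Classical
noncomputable section

/-- The block of `x` lies entirely in the top row `{1,…,l}`. -/
def TopOnly (l k : ℕ) (π : Setoid (Fin (l + k))) (x : Fin (l + k)) : Prop :=
  ∀ y, π.r x y → y.val < l

/-- The block of `x` lies entirely in the bottom row `{l+1,…,l+k}`. -/
def BotOnly (l k : ℕ) (π : Setoid (Fin (l + k))) (x : Fin (l + k)) : Prop :=
  ∀ y, π.r x y → l ≤ y.val

/-- A set of vertices is a set of consecutive integers. -/
def Consec {N : ℕ} (S : Set (Fin N)) : Prop :=
  ∀ a b c : Fin N, a ∈ S → c ∈ S → a ≤ b → b ≤ c → b ∈ S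

/-- A set partition `π` of `[l+k]` is *algorithmically planar*:
(i) top-row-only blocks are consecutive and occupy an initial segment of the top row;
(ii) bottom-row-only blocks are consecutive, occupy a final segment of the bottom row,
and have sizes non-decreasing from left to right;
(iii) for blocks meeting both rows, the top part and bottom part are each consecutive,
and no two such blocks cross. -/
def AlgPlanar (l k : ℕ) (π : Setoid (Fin (l + k))) : Prop :=
  (∀ x, TopOnly l k π x → Consec {y | π.r x y}) ∧
  (∀ x y, TopOnly l k π x → y ≤ x → TopOnly l k π y) ∧
  (∀ x, BotOnly l k π x → Consec {y | π.r x y}) ∧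
  (∀ x y, BotOnly l k π x → x ≤ y → BotOnly l k π y) ∧
  (∀ x y, BotOnly l k π x → BotOnly l k π y → x < y → ¬ π.r x y →
    Nat.card {z | π.r x z} ≤ Nat.card {z | π.r y z}) ∧
  (∀ x, ¬ TopOnly l k π x → ¬ BotOnly l k π x →
    Consec {y | π.r x y ∧ y.val < l} ∧ Consec {y | π.r x y ∧ l ≤ y.val}) ∧
  (∀ x x', ¬ TopOnly l k π x → ¬ BotOnly l k π x →
    ¬ TopOnly l k π x' → ¬ BotOnly l k π x' → ¬ π.r x x' →
    ((∀ a b, π.r x a → a.val < l → π.r x' b → b.val < l → a < b) ↔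
     (∀ a b, π.r x a → l ≤ a.val → π.r x' b → l ≤ b.val → a < b)))

namespace PlanarAux

lemma lex3_le {a b c a' b' c' : ℕ} :
    (toLex (a, toLex (b, c)) ≤ toLex (a', toLex (b', c'))) ↔
      a < a' ∨ (a = a' ∧ (b < b' ∨ (b = b' ∧ c ≤ c'))) := by
  rw [Prod.Lex.le_iff, Prod.Lex.le_iff]
  exact Iff.rfl

lemma lex3_lt {a b c a' b' c' : ℕ} :
    (toLex (a, toLex (b, c)) < toLex (a', toLex (b', c'))) ↔
      a < a' ∨ (a = a' ∧ (b < b' ∨ (b = b' ∧ c < c'))) := by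
  rw [Prod.Lex.lt_iff, Prod.Lex.lt_iff]
  exact Iff.rfl

lemma lex4_le {a b c d a' b' c' d' : ℕ} :
    (toLex (a, toLex (b, toLex (c, d))) ≤ toLex (a', toLex (b', toLex (c', d')))) ↔
      a < a' ∨ (a = a' ∧ (b < b' ∨ (b = b' ∧ (c < c' ∨ (c = c' ∧ d ≤ d'))))) := by
  rw [Prod.Lex.le_iff, Prod.Lex.le_iff, Prod.Lex.le_iff]
  exact Iff.rfl

lemma lex4_lt {a b c d a' b' c' d' : ℕ} :
    (toLex (a, toLex (b, toLex (c, d))) < toLex (a', toLex (b', toLex (c', d')))) ↔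
      a < a' ∨ (a = a' ∧ (b < b' ∨ (b = b' ∧ (c < c' ∨ (c = c' ∧ d < d'))))) := by
  rw [Prod.Lex.lt_iff, Prod.Lex.lt_iff, Prod.Lex.lt_iff]
  exact Iff.rfl

variable {l k : ℕ}

lemma permSum_castAdd (σl : Equiv.Perm (Fin l)) (σk : Equiv.Perm (Fin k))
    (a : Fin l) : permSum l k σl σk (Fin.castAdd k a) = Fin.castAdd k (σl a) := by
  simp [permSum]

lemma permSum_natAdd (σl : Equiv.Perm (Fin l)) (σk : Equiv.Perm (Fin k))
    (b : Fin k) : permSum l k σl σk (Fin.natAdd l b) = Fin.natAdd l (σk b) := by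
  simp [permSum]

lemma permSum_permSum (σl τl : Equiv.Perm (Fin l)) (σk τk : Equiv.Perm (Fin k))
    (x : Fin (l + k)) :
    permSum l k σl σk (permSum l k τl τk x) = permSum l k (σl * τl) (σk * τk) x := by
  induction x using Fin.addCases with
  | left a => simp [permSum_castAdd]
  | right b => simp [permSum_natAdd]

lemma permSum_one (x : Fin (l + k)) : permSum l k 1 1 x = x := by
  induction x using Fin.addCases with
  | left a => simp [permSum_castAdd]
  | right b => simp [permSum_natAdd]

variable (π : Setoid (Fin (l + k)))

/-- minimal label in the block of `x`. -/
def repN (x : Fin (l + k)) : ℕ := sInf {m | ∃ y, π.r x y ∧ y.val = m}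

lemma repN_spec (x : Fin (l + k)) : ∃ y, π.r x y ∧ y.val = repN π x := by
  have h : repN π x ∈ {m | ∃ y, π.r x y ∧ y.val = m} :=
    Nat.sInf_mem (s := {m | ∃ y, π.r x y ∧ y.val = m}) ⟨x.val, x, π.iseqv.refl x, rfl⟩
  exact h

lemma repN_congr {x y : Fin (l + k)} (h : π.r x y) : repN π x = repN π y := by
  unfold repN; congr 1; ext m
  constructor
  · rintro ⟨z, hz, rfl⟩; exact ⟨z, π.iseqv.trans (π.iseqv.symm h) hz, rfl⟩
  · rintro ⟨z, hz, rfl⟩; exact ⟨z, π.iseqv.trans h hz, rfl⟩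

lemma rel_of_repN_eq {x y : Fin (l + k)} (h : repN π x = repN π y) : π.r x y := by
  obtain ⟨a, ha, hav⟩ := repN_spec π x
  obtain ⟨b, hb, hbv⟩ := repN_spec π y
  have hab : a = b := Fin.ext (by omega)
  subst hab
  exact π.iseqv.trans ha (π.iseqv.symm hb)

lemma topOnly_congr {x y : Fin (l + k)} (h : π.r x y) :
    TopOnly l k π x ↔ TopOnly l k π y := by
  constructor
  · intro H z hz; exact H z (π.iseqv.trans h hz)
  · intro H z hz; exact H z (π.iseqv.trans (π.iseqv.symm h) hz)

lemma botOnly_congr {x y : Fin (l + k)} (h : π.r x y) :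
    BotOnly l k π x ↔ BotOnly l k π y := by
  constructor
  · intro H z hz; exact H z (π.iseqv.trans h hz)
  · intro H z hz; exact H z (π.iseqv.trans (π.iseqv.symm h) hz)

lemma cls_eq {x y : Fin (l + k)} (h : π.r x y) :
    {z | π.r x z} = {z | π.r y z} :=
  Set.ext fun z => ⟨fun hz => π.iseqv.trans (π.iseqv.symm h) hz,
    fun hz => π.iseqv.trans h hz⟩

/-- top bit: 0 on top-only blocks, 1 otherwise. -/
def mB (x : Fin (l + k)) : ℕ := if TopOnly l k π x then 0 else 1
/-- bottom bit: 1 on bottom-only blocks, 0 otherwise. -/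
def bB (x : Fin (l + k)) : ℕ := if BotOnly l k π x then 1 else 0
/-- size of block of bottom-only blocks. -/
def cN (x : Fin (l + k)) : ℕ :=
  if BotOnly l k π x then Nat.card {y | π.r x y} else 0

lemma mB_congr {x y : Fin (l + k)} (h : π.r x y) : mB π x = mB π y := by
  unfold mB; rw [topOnly_congr π h]

lemma bB_congr {x y : Fin (l + k)} (h : π.r x y) : bB π x = bB π y := by
  unfold bB; rw [botOnly_congr π h]

lemma cN_congr {x y : Fin (l + k)} (h : π.r x y) : cN π x = cN π y := by
  unfold cN; rw [botOnly_congr π h, cls_eq π h]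

lemma mB_eq_zero_iff (x : Fin (l + k)) : mB π x = 0 ↔ TopOnly l k π x := by
  by_cases h : TopOnly l k π x <;> simp [mB, h]

lemma bB_eq_one_iff (x : Fin (l + k)) : bB π x = 1 ↔ BotOnly l k π x := by
  by_cases h : BotOnly l k π x <;> simp [bB, h]

def topKey (a : Fin l) : ℕ ×ₗ (ℕ ×ₗ ℕ) :=
  toLex (mB π (Fin.castAdd k a), toLex (repN π (Fin.castAdd k a), a.val))

def botKey (b : Fin k) : ℕ ×ₗ (ℕ ×ₗ (ℕ ×ₗ ℕ)) :=
  toLex (bB π (Fin.natAdd l b), toLex (cN π (Fin.natAdd l b),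
    toLex (repN π (Fin.natAdd l b), b.val)))

def sTop : Equiv.Perm (Fin l) := Tuple.sort (topKey π)
def sBot : Equiv.Perm (Fin k) := Tuple.sort (botKey π)

def tau : Fin (l + k) → Fin (l + k) := permSum l k (sTop π) (sBot π)
def tauInv : Fin (l + k) → Fin (l + k) := permSum l k (sTop π)⁻¹ (sBot π)⁻¹

def π₂ : Setoid (Fin (l + k)) := Setoid.comap (tau π) π

lemma tau_tauInv (x : Fin (l + k)) : tau π (tauInv π x) = x := by
  rw [tau, tauInv, permSum_permSum]; simp [permSum_one]

lemma tauInv_tau (x : Fin (l + k)) : tauInv π (tau π x) = x := by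
  rw [tau, tauInv, permSum_permSum]; simp [permSum_one]

lemma tau_lt_iff (x : Fin (l + k)) : (tau π x).val < l ↔ x.val < l := by
  induction x using Fin.addCases with
  | left a => rw [tau, permSum_castAdd]; simp
  | right b =>
    rw [tau, permSum_natAdd]; simp

lemma rel₂ (x y : Fin (l + k)) : (π₂ π).r x y ↔ π.r (tau π x) (tau π y) := Iff.rfl

example : True := trivial

lemma tau_ge_iff (x : Fin (l + k)) : l ≤ (tau π x).val ↔ l ≤ x.val := by
  rw [← not_lt, ← not_lt, tau_lt_iff]

lemma topOnly₂ (x : Fin (l + k)) :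
    TopOnly l k (π₂ π) x ↔ TopOnly l k π (tau π x) := by
  constructor
  · intro h z hz
    have h1 : (π₂ π).r x (tauInv π z) := by
      rw [rel₂, tau_tauInv]; exact hz
    have h2 := h _ h1
    have := (tau_lt_iff π (tauInv π z)).mpr h2
    rwa [tau_tauInv] at this
  · intro h z hz
    rw [← tau_lt_iff]
    exact h _ ((rel₂ π x z).mp hz)

lemma botOnly₂ (x : Fin (l + k)) :
    BotOnly l k (π₂ π) x ↔ BotOnly l k π (tau π x) := by
  constructor
  · intro h z hz
    have h1 : (π₂ π).r x (tauInv π z) := by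
      rw [rel₂, tau_tauInv]; exact hz
    have h2 := h _ h1
    have := (tau_ge_iff π (tauInv π z)).mpr h2
    rwa [tau_tauInv] at this
  · intro h z hz
    rw [← tau_ge_iff]
    exact h _ ((rel₂ π x z).mp hz)

/-- `tau` as an equivalence. -/
def tauE : Equiv.Perm (Fin (l + k)) :=
  ⟨tau π, tauInv π, tauInv_tau π, tau_tauInv π⟩

lemma card₂ (x : Fin (l + k)) :
    Nat.card {z | (π₂ π).r x z} = Nat.card {z | π.r (tau π x) z} :=
  Nat.card_congr ((tauE π).subtypeEquiv fun z => rel₂ π x z)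

def XT (p : Fin l) : Fin (l + k) := Fin.castAdd k (sTop π p)
def XB (q : Fin k) : Fin (l + k) := Fin.natAdd l (sBot π q)

lemma tau_top (a : Fin (l + k)) (ha : a.val < l) :
    tau π a = XT π ⟨a.val, ha⟩ := by
  conv_lhs => rw [show a = Fin.castAdd k ⟨a.val, ha⟩ by ext; simp]
  rw [tau, permSum_castAdd]; rfl

lemma tau_bot (a : Fin (l + k)) (ha : l ≤ a.val) :
    tau π a = XB π ⟨a.val - l, by omega⟩ := by
  conv_lhs => rw [show a = Fin.natAdd l ⟨a.val - l, by omega⟩ by ext; simp; omega]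
  rw [tau, permSum_natAdd]; rfl

lemma topKey_inj : Function.Injective (topKey π) := by
  intro a b h
  have h1 : a.val = b.val := by
    have := congrArg (fun z => (ofLex ((ofLex z).2)).2) h
    simpa [topKey] using this
  exact Fin.ext h1

lemma botKey_inj : Function.Injective (botKey π) := by
  intro a b h
  have h1 : a.val = b.val := by
    have := congrArg (fun z => (ofLex ((ofLex ((ofLex z).2)).2)).2) h
    simpa [botKey] using this
  exact Fin.ext h1

lemma smTop : StrictMono (topKey π ∘ ⇑(sTop π)) :=
  (Tuple.monotone_sort (topKey π)).strictMono_of_injective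
    ((topKey_inj π).comp (sTop π).injective)

lemma smBot : StrictMono (botKey π ∘ ⇑(sBot π)) :=
  (Tuple.monotone_sort (botKey π)).strictMono_of_injective
    ((botKey_inj π).comp (sBot π).injective)

lemma top_le' {p q : Fin l} (h : p ≤ q) :
    mB π (XT π p) < mB π (XT π q) ∨ (mB π (XT π p) = mB π (XT π q) ∧
      (repN π (XT π p) < repN π (XT π q) ∨ (repN π (XT π p) = repN π (XT π q) ∧
        (sTop π p).val ≤ (sTop π q).val))) :=
  lex3_le.mp ((smTop π).monotone h)

lemma top_lt' {p q : Fin l} (h : p < q) :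
    mB π (XT π p) < mB π (XT π q) ∨ (mB π (XT π p) = mB π (XT π q) ∧
      (repN π (XT π p) < repN π (XT π q) ∨ (repN π (XT π p) = repN π (XT π q) ∧
        (sTop π p).val < (sTop π q).val))) :=
  lex3_lt.mp ((smTop π) h)

lemma top_lt_of_key {p q : Fin l}
    (h : mB π (XT π p) = mB π (XT π q)) (h2 : repN π (XT π p) < repN π (XT π q)) :
    p < q :=
  (smTop π).lt_iff_lt.mp (lex3_lt.mpr (Or.inr ⟨h, Or.inl h2⟩))

lemma bot_le' {p q : Fin k} (h : p ≤ q) :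
    bB π (XB π p) < bB π (XB π q) ∨ (bB π (XB π p) = bB π (XB π q) ∧
      (cN π (XB π p) < cN π (XB π q) ∨ (cN π (XB π p) = cN π (XB π q) ∧
        (repN π (XB π p) < repN π (XB π q) ∨ (repN π (XB π p) = repN π (XB π q) ∧
          (sBot π p).val ≤ (sBot π q).val))))) :=
  lex4_le.mp ((smBot π).monotone h)

lemma bot_lt' {p q : Fin k} (h : p < q) :
    bB π (XB π p) < bB π (XB π q) ∨ (bB π (XB π p) = bB π (XB π q) ∧
      (cN π (XB π p) < cN π (XB π q) ∨ (cN π (XB π p) = cN π (XB π q) ∧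
        (repN π (XB π p) < repN π (XB π q) ∨ (repN π (XB π p) = repN π (XB π q) ∧
          (sBot π p).val < (sBot π q).val))))) :=
  lex4_lt.mp ((smBot π) h)

lemma bot_lt_of_key {p q : Fin k}
    (h : bB π (XB π p) = bB π (XB π q)) (h1 : cN π (XB π p) = cN π (XB π q))
    (h2 : repN π (XB π p) < repN π (XB π q)) : p < q :=
  (smBot π).lt_iff_lt.mp (lex4_lt.mpr (Or.inr ⟨h, Or.inr ⟨h1, Or.inl h2⟩⟩))

lemma top_squeeze {p q r : Fin l} (hpq : p ≤ q) (hqr : q ≤ r)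
    (hrel : π.r (XT π p) (XT π r)) : π.r (XT π p) (XT π q) := by
  have e1 : mB π (XT π p) = mB π (XT π r) := mB_congr π hrel
  have e2 : repN π (XT π p) = repN π (XT π r) := repN_congr π hrel
  have l1 := top_le' π hpq
  have l2 := top_le' π hqr
  apply rel_of_repN_eq π
  omega

lemma bot_squeeze {p q r : Fin k} (hpq : p ≤ q) (hqr : q ≤ r)
    (hrel : π.r (XB π p) (XB π r)) : π.r (XB π p) (XB π q) := by
  have e0 : bB π (XB π p) = bB π (XB π r) := bB_congr π hrel
  have e1 : cN π (XB π p) = cN π (XB π r) := cN_congr π hrel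
  have e2 : repN π (XB π p) = repN π (XB π r) := repN_congr π hrel
  have l1 := bot_le' π hpq
  have l2 := bot_le' π hqr
  apply rel_of_repN_eq π
  omega

example : True := trivial

lemma rel₂_top {a b : Fin (l + k)} (ha : a.val < l) (hb : b.val < l) :
    (π₂ π).r a b ↔ π.r (XT π ⟨a.val, ha⟩) (XT π ⟨b.val, hb⟩) := by
  rw [rel₂, tau_top π a ha, tau_top π b hb]

lemma rel₂_bot {a b : Fin (l + k)} (ha : l ≤ a.val) (hb : l ≤ b.val) :
    (π₂ π).r a b ↔ π.r (XB π ⟨a.val - l, by omega⟩) (XB π ⟨b.val - l, by omega⟩) := by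
  rw [rel₂, tau_bot π a ha, tau_bot π b hb]

lemma main_planar : AlgPlanar l k (π₂ π) := by
  refine ⟨?_, ?_, ?_, ?_, ?_, ?_, ?_⟩
  · -- top-only blocks consecutive
    intro x hx a b c ha hc hab hbc
    have hal : a.val < l := hx a ha
    have hcl : c.val < l := hx c hc
    have hbl : b.val < l := lt_of_le_of_lt hbc hcl
    have hac : (π₂ π).r a c := (π₂ π).iseqv.trans ((π₂ π).iseqv.symm ha) hc
    have h1 : π.r (XT π ⟨a.val, hal⟩) (XT π ⟨c.val, hcl⟩) :=
      (rel₂_top π hal hcl).mp hac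
    have h2 : π.r (XT π ⟨a.val, hal⟩) (XT π ⟨b.val, hbl⟩) :=
      top_squeeze π (show (⟨a.val, hal⟩ : Fin l) ≤ ⟨b.val, hbl⟩ from hab)
        (show (⟨b.val, hbl⟩ : Fin l) ≤ ⟨c.val, hcl⟩ from hbc) h1
    exact (π₂ π).iseqv.trans ha ((rel₂_top π hal hbl).mpr h2)
  · -- top-only blocks form an initial segment
    intro x y hx hyx
    have hxl : x.val < l := hx x ((π₂ π).iseqv.refl x)
    have hyl : y.val < l := lt_of_le_of_lt hyx hxl
    rw [topOnly₂, tau_top π y hyl]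
    rw [← mB_eq_zero_iff]
    have h0 : mB π (XT π ⟨x.val, hxl⟩) = 0 := by
      rw [mB_eq_zero_iff, ← tau_top π x hxl]
      exact (topOnly₂ π x).mp hx
    have := top_le' π (show (⟨y.val, hyl⟩ : Fin l) ≤ ⟨x.val, hxl⟩ from hyx)
    omega
  · -- bottom-only blocks consecutive
    intro x hx a b c ha hc hab hbc
    have hal : l ≤ a.val := hx a ha
    have hcl : l ≤ c.val := hx c hc
    have hbl : l ≤ b.val := le_trans hal hab
    have hac : (π₂ π).r a c := (π₂ π).iseqv.trans ((π₂ π).iseqv.symm ha) hc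
    have h1 := (rel₂_bot π hal hcl).mp hac
    have h2 : π.r (XB π ⟨a.val - l, by omega⟩) (XB π ⟨b.val - l, by omega⟩) := by
      refine bot_squeeze π ?_ ?_ h1
      · show a.val - l ≤ b.val - l; omega
      · show b.val - l ≤ c.val - l
        have : b.val ≤ c.val := hbc
        omega
    exact (π₂ π).iseqv.trans ha ((rel₂_bot π hal hbl).mpr h2)
  · -- bottom-only blocks form a final segment
    intro x y hx hxy
    have hxl : l ≤ x.val := hx x ((π₂ π).iseqv.refl x)
    have hyl : l ≤ y.val := le_trans hxl hxy
    rw [botOnly₂, tau_bot π y hyl]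
    rw [← bB_eq_one_iff]
    have h0 : bB π (XB π ⟨x.val - l, by omega⟩) = 1 := by
      rw [bB_eq_one_iff, ← tau_bot π x hxl]
      exact (botOnly₂ π x).mp hx
    have hb1 : bB π (XB π ⟨y.val - l, by omega⟩) ≤ 1 := by
      by_cases h : BotOnly l k π (XB π ⟨y.val - l, by omega⟩) <;> simp [bB, h]
    have := bot_le' π
      (show (⟨x.val - l, by omega⟩ : Fin k) ≤ ⟨y.val - l, by omega⟩ from by
        show x.val - l ≤ y.val - l
        have : x.val ≤ y.val := hxy
        omega)
    omega
  · -- bottom-only block sizes nondecreasing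
    intro x y hx hy hxy _
    have hxl : l ≤ x.val := hx x ((π₂ π).iseqv.refl x)
    have hyl : l ≤ y.val := hy y ((π₂ π).iseqv.refl y)
    have hbx : BotOnly l k π (tau π x) := (botOnly₂ π x).mp hx
    have hby : BotOnly l k π (tau π y) := (botOnly₂ π y).mp hy
    rw [card₂, card₂, tau_bot π x hxl, tau_bot π y hyl]
    rw [tau_bot π x hxl] at hbx
    rw [tau_bot π y hyl] at hby
    have hcx : cN π (XB π ⟨x.val - l, by omega⟩) =
        Nat.card {z | π.r (XB π ⟨x.val - l, by omega⟩) z} := by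
      unfold cN; rw [if_pos hbx]
    have hcy : cN π (XB π ⟨y.val - l, by omega⟩) =
        Nat.card {z | π.r (XB π ⟨y.val - l, by omega⟩) z} := by
      unfold cN; rw [if_pos hby]
    have hbBx : bB π (XB π ⟨x.val - l, by omega⟩) = 1 := (bB_eq_one_iff π _).mpr hbx
    have hbBy : bB π (XB π ⟨y.val - l, by omega⟩) = 1 := (bB_eq_one_iff π _).mpr hby
    have := bot_le' π
      (show (⟨x.val - l, by omega⟩ : Fin k) ≤ ⟨y.val - l, by omega⟩ from by
        show x.val - l ≤ y.val - l
        have : x.val < y.val := hxy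
        omega)
    omega
  · -- mixed blocks: top and bottom parts consecutive
    intro x hxt hxb
    constructor
    · intro a b c ha hc hab hbc
      obtain ⟨hra, hal⟩ := ha
      obtain ⟨hrc, hcl⟩ := hc
      have hbl : b.val < l := lt_of_le_of_lt hbc hcl
      have hac : (π₂ π).r a c := (π₂ π).iseqv.trans ((π₂ π).iseqv.symm hra) hrc
      have h1 := (rel₂_top π hal hcl).mp hac
      have h2 : π.r (XT π ⟨a.val, hal⟩) (XT π ⟨b.val, hbl⟩) :=
        top_squeeze π (show (⟨a.val, hal⟩ : Fin l) ≤ ⟨b.val, hbl⟩ from hab)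
          (show (⟨b.val, hbl⟩ : Fin l) ≤ ⟨c.val, hcl⟩ from hbc) h1
      exact ⟨(π₂ π).iseqv.trans hra ((rel₂_top π hal hbl).mpr h2), hbl⟩
    · intro a b c ha hc hab hbc
      obtain ⟨hra, hal⟩ := ha
      obtain ⟨hrc, hcl⟩ := hc
      have hbl : l ≤ b.val := le_trans hal hab
      have hac : (π₂ π).r a c := (π₂ π).iseqv.trans ((π₂ π).iseqv.symm hra) hrc
      have h1 := (rel₂_bot π hal hcl).mp hac
      have h2 : π.r (XB π ⟨a.val - l, by omega⟩) (XB π ⟨b.val - l, by omega⟩) := by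
        refine bot_squeeze π ?_ ?_ h1
        · show a.val - l ≤ b.val - l; omega
        · show b.val - l ≤ c.val - l
          have : b.val ≤ c.val := hbc
          omega
      exact ⟨(π₂ π).iseqv.trans hra ((rel₂_bot π hal hbl).mpr h2), hbl⟩
  · -- noncrossing of mixed blocks
    intro x x' hxt hxb hx't hx'b hnr
    have hxt' : ¬ TopOnly l k π (tau π x) := fun h => hxt ((topOnly₂ π x).mpr h)
    have hxb' : ¬ BotOnly l k π (tau π x) := fun h => hxb ((botOnly₂ π x).mpr h)
    have hx't' : ¬ TopOnly l k π (tau π x') := fun h => hx't ((topOnly₂ π x').mpr h)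
    have hx'b' : ¬ BotOnly l k π (tau π x') := fun h => hx'b ((botOnly₂ π x').mpr h)
    set r := repN π (tau π x) with hr
    set r' := repN π (tau π x') with hr'
    have hrne : r ≠ r' := fun h => hnr ((rel₂ π x x').mpr (rel_of_repN_eq π h))
    -- existence of top and bottom elements in each block
    have hex_top : ∀ z : Fin (l + k), ¬ BotOnly l k (π₂ π) z →
        ∃ a, (π₂ π).r z a ∧ a.val < l := by
      intro z hz
      by_contra h
      push_neg at h
      exact hz h
    have hex_bot : ∀ z : Fin (l + k), ¬ TopOnly l k (π₂ π) z →
        ∃ a, (π₂ π).r z a ∧ l ≤ a.val := by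
      intro z hz
      by_contra h
      push_neg at h
      exact hz h
    -- data of top members
    have htop_dat : ∀ z : Fin (l + k), ¬ TopOnly l k π (tau π z) →
        ∀ a (ha : (π₂ π).r z a) (hal : a.val < l),
        mB π (XT π ⟨a.val, hal⟩) = 1 ∧ repN π (XT π ⟨a.val, hal⟩) = repN π (tau π z) := by
      intro z hz a ha hal
      have hrel : π.r (tau π z) (XT π ⟨a.val, hal⟩) := by
        have := (rel₂ π z a).mp ha
        rwa [tau_top π a hal] at this
      constructor
      · rw [← mB_congr π hrel]
        unfold mB; rw [if_neg hz]
      · exact (repN_congr π hrel).symm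
    have hbot_dat : ∀ z : Fin (l + k), ¬ BotOnly l k π (tau π z) →
        ∀ a (ha : (π₂ π).r z a) (hal : l ≤ a.val),
        bB π (XB π ⟨a.val - l, by omega⟩) = 0 ∧ cN π (XB π ⟨a.val - l, by omega⟩) = 0 ∧
          repN π (XB π ⟨a.val - l, by omega⟩) = repN π (tau π z) := by
      intro z hz a ha hal
      have hrel : π.r (tau π z) (XB π ⟨a.val - l, by omega⟩) := by
        have := (rel₂ π z a).mp ha
        rwa [tau_bot π a hal] at this
      have hnb : ¬ BotOnly l k π (XB π ⟨a.val - l, by omega⟩) := by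
        rw [← botOnly_congr π hrel]; exact hz
      refine ⟨?_, ?_, (repN_congr π hrel).symm⟩
      · unfold bB; rw [if_neg hnb]
      · unfold cN; rw [if_neg hnb]
    constructor
    · -- top condition → bottom condition
      intro H a b ha hal hb hbl
      obtain ⟨at', hat, hatl⟩ := hex_top x hxb
      obtain ⟨bt', hbt, hbtl⟩ := hex_top x' hx'b
      have hab' : at' < bt' := H at' bt' hat hatl hbt hbtl
      -- deduce r < r'
      have hda := htop_dat x hxt' at' hat hatl
      have hdb := htop_dat x' hx't' bt' hbt hbtl
      have hlt := top_lt' π (show (⟨at'.val, hatl⟩ : Fin l) < ⟨bt'.val, hbtl⟩ from hab')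
      have hrr : r < r' := by omega
      -- conclude on bottom
      have hda2 := hbot_dat x hxb' a ha hal
      have hdb2 := hbot_dat x' hx'b' b hb hbl
      have : (⟨a.val - l, by omega⟩ : Fin k) < ⟨b.val - l, by omega⟩ := by
        refine bot_lt_of_key π (by omega) (by omega) (by omega)
      show a.val < b.val
      have : a.val - l < b.val - l := this
      omega
    · -- bottom condition → top condition
      intro H a b ha hal hb hbl
      obtain ⟨at', hat, hatl⟩ := hex_bot x hxt
      obtain ⟨bt', hbt, hbtl⟩ := hex_bot x' hx't
      have hab' : at' < bt' := H at' bt' hat hatl hbt hbtl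
      have hda := hbot_dat x hxb' at' hat hatl
      have hdb := hbot_dat x' hx'b' bt' hbt hbtl
      have hlt := bot_lt' π
        (show (⟨at'.val - l, by omega⟩ : Fin k) < ⟨bt'.val - l, by omega⟩ from by
          show at'.val - l < bt'.val - l
          have : at'.val < bt'.val := hab'
          omega)
      have hrr : r < r' := by omega
      have hda2 := htop_dat x hxt' a ha hal
      have hdb2 := htop_dat x' hx't' b hb hbl
      have : (⟨a.val, hal⟩ : Fin l) < ⟨b.val, hbl⟩ :=
        top_lt_of_key π (by omega) (by omega)
      exact this

example : True := trivial

lemma Dmat_relabel (n : ℕ) (σl : Equiv.Perm (Fin l)) (σk : Equiv.Perm (Fin k))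
    (π : Setoid (Fin (l + k))) :
    Dmat n l k π =
      Qmat n l σl⁻¹ * Dmat n l k (relabelSetoid l k σl σk π) * Qmat n k σk := by
  have hps : ∀ z : Fin (l + k),
      permSum l k σl⁻¹ σk⁻¹ (permSum l k σl σk z) = z := by
    intro z; rw [permSum_permSum]; simp [permSum_one]
  ext I J
  have happ : ∀ x : Fin (l + k),
      Fin.append (I ∘ ⇑σl⁻¹) (J ∘ ⇑σk⁻¹) x =
        Fin.append I J (permSum l k σl⁻¹ σk⁻¹ x) := by
    intro x
    induction x using Fin.addCases with
    | left a => rw [permSum_castAdd]; simp [Fin.append_left]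
    | right b => rw [permSum_natAdd]; simp [Fin.append_right]
  have hcond : ∀ I' : Fin l → Fin n, (I = I' ∘ ⇑((σl⁻¹)⁻¹)) ↔ (I' = I ∘ ⇑σl⁻¹) := by
    intro I'
    rw [inv_inv]
    constructor
    · intro h; funext j; simp [h]
    · intro h; funext j; simp [h]
  rw [Matrix.mul_apply]
  have hone : ∀ J' : Fin k → Fin n,
      (Qmat n l σl⁻¹ * Dmat n l k (relabelSetoid l k σl σk π)) I J' =
        Dmat n l k (relabelSetoid l k σl σk π) (I ∘ ⇑σl⁻¹) J' := by
    intro J'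
    rw [Matrix.mul_apply]
    simp only [Qmat, Matrix.of_apply, hcond, ite_mul, one_mul, zero_mul]
    rw [Finset.sum_ite_eq' Finset.univ (I ∘ ⇑σl⁻¹)]
    simp
  simp only [hone]
  simp only [Qmat, Matrix.of_apply, mul_ite, mul_one, mul_zero]
  rw [Finset.sum_ite_eq' Finset.univ (J ∘ ⇑σk⁻¹)]
  simp only [Finset.mem_univ, if_true]
  -- now entrywise equality
  show Dmat n l k π I J = Dmat n l k (relabelSetoid l k σl σk π) (I ∘ ⇑σl⁻¹) (J ∘ ⇑σk⁻¹)
  unfold Dmat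
  simp only [Matrix.of_apply]
  refine if_congr ?_ rfl rfl
  constructor
  · intro h x y hxy
    rw [happ, happ]
    exact h _ _ hxy
  · intro h x y hxy
    have h2 := h (permSum l k σl σk x) (permSum l k σl σk y)
      (by show π.r (permSum l k σl⁻¹ σk⁻¹ _) (permSum l k σl⁻¹ σk⁻¹ _)
          rw [hps, hps]; exact hxy)
    rw [happ, happ, hps, hps] at h2
    exact h2

lemma relabel_eq : relabelSetoid l k (sTop π)⁻¹ (sBot π)⁻¹ π = π₂ π := by
  unfold relabelSetoid π₂ tau
  rw [inv_inv, inv_inv]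

end PlanarAux

/-- every set partition `π` of `[l+k]` can be relabeled by permutations
`σ_l ∈ S_l`, `σ_k ∈ S_k` of the rows into an algorithmically planar set partition
`π′ = (σ_l,σ_k)·π`, and consequently `D_π = Q_{σ_l}⁻¹ ∘ D_{π′} ∘ Q_{σ_k}`. -/
theorem exists_algPlanar_relabel (n k l : ℕ) (hn : 0 < n) (π : Setoid (Fin (l + k))) :
    ∃ (σl : Equiv.Perm (Fin l)) (σk : Equiv.Perm (Fin k)),
      AlgPlanar l k (relabelSetoid l k σl σk π) ∧
      Dmat n l k π =
        Qmat n l σl⁻¹ * Dmat n l k (relabelSetoid l k σl σk π) * Qmat n k σk := by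
  refine ⟨(PlanarAux.sTop π)⁻¹, (PlanarAux.sBot π)⁻¹, ?_, ?_⟩
  · rw [PlanarAux.relabel_eq]
    exact PlanarAux.main_planar π
  · exact PlanarAux.Dmat_relabel n _ _ π
end
end
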